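/- arXiv:2603.14654 — 11 statements merged into one kernel-verified Lean document; each statement's English description precedes it below -/
import Mathlib

section
/- Let A be a finite multiset of elements of an abelian group and let k ≥ 2 be an integer. Then A can be partitioned into k sub-multisets A_1, …, A_k such that |Σ(A_i)| ≥ 2^{1/k - 1}·|Σ(A)|^{1/k} for every 1 ≤ i ≤ k, where Σ(B) denotes the set of all subset sums of B (including the empty sum). -/
open Finset Pointwise

section
variable {G : Type*} [AddCommGroup G] [DecidableEq G]

def Sig (B : Multiset G) : Finset G := (B.powerset.map Multiset.sum).toFinset

lemma mem_Sig {B : Multiset G} {x : G} : x ∈ Sig B ↔ ∃ B' ≤ B, B'.sum = x := by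
  simp [Sig, Multiset.mem_powerset]

lemma zero_mem_Sig (B : Multiset G) : (0:G) ∈ Sig B := mem_Sig.2 ⟨0, zero_le, rfl⟩

lemma Sig_card_pos (B : Multiset G) : 0 < (Sig B).card :=
  Finset.card_pos.2 ⟨0, zero_mem_Sig B⟩

lemma Sig_mono {B C : Multiset G} (h : B ≤ C) : Sig B ⊆ Sig C := by
  intro x hx
  obtain ⟨B', hB', rfl⟩ := mem_Sig.1 hx
  exact mem_Sig.2 ⟨B', hB'.trans h, rfl⟩

lemma Sig_add_subset (B C : Multiset G) : Sig (B + C) ⊆ Sig B + Sig C := by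
  intro x hx
  obtain ⟨D, hD, rfl⟩ := mem_Sig.1 hx
  have h2 : D - B ≤ C := by
    rw [tsub_le_iff_right]; exact hD.trans (le_of_eq (add_comm _ _))
  have h1 : D - (D - B) ≤ B := tsub_tsub_le
  have hDeq : (D - (D - B)) + (D - B) = D := tsub_add_cancel_of_le tsub_le_self
  rw [← hDeq, Multiset.sum_add]
  exact Finset.add_mem_add (mem_Sig.2 ⟨_, h1, rfl⟩) (mem_Sig.2 ⟨_, h2, rfl⟩)

lemma Sig_card_add_le (B C : Multiset G) :
    (Sig (B + C)).card ≤ (Sig B).card * (Sig C).card :=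
  (Finset.card_le_card (Sig_add_subset B C)).trans Finset.card_add_le

lemma Sig_card_single_le (x : G) : (Sig {x}).card ≤ 2 := by
  have : Sig ({x} : Multiset G) ⊆ {0, x} := by
    intro y hy
    obtain ⟨B', hB', rfl⟩ := mem_Sig.1 hy
    rw [Multiset.le_singleton] at hB'
    rcases hB' with rfl | rfl <;> simp
  exact (Finset.card_le_card this).trans ((Finset.card_insert_le _ _).trans (by simp))

lemma Sig_zero : Sig (0 : Multiset G) = {0} := by
  ext x; simp [mem_Sig, eq_comm]

lemma take_le_take (l : List G) {t t' : ℕ} (h : t ≤ t') :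
    (↑(l.take t) : Multiset G) ≤ ↑(l.take t') := by
  rw [Multiset.coe_le]
  have h2 : (l.take t').take t = l.take t := by rw [List.take_take, min_eq_left h]
  exact (h2 ▸ (List.take_prefix t (l.take t')).sublist).subperm

lemma Sig_take_succ (l : List G) (t : ℕ) :
    (Sig (↑(l.take (t+1)) : Multiset G)).card ≤ 2 * (Sig (↑(l.take t) : Multiset G)).card := by
  by_cases h : t < l.length
  · have h1 : l.take (t+1) = l.take t ++ [l.get ⟨t, h⟩] := by
      rw [List.take_succ, List.getElem?_eq_getElem h]
      rfl
    rw [h1]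
    have h2 : (↑(l.take t ++ [l.get ⟨t, h⟩]) : Multiset G) = ↑(l.take t) + {l.get ⟨t, h⟩} := by
      rw [← Multiset.coe_add]
      rfl
    rw [h2]
    calc (Sig (↑(l.take t) + {l.get ⟨t, h⟩})).card
        ≤ (Sig (↑(l.take t) : Multiset G)).card * (Sig ({l.get ⟨t, h⟩} : Multiset G)).card :=
          Sig_card_add_le _ _
      _ ≤ (Sig (↑(l.take t) : Multiset G)).card * 2 :=
          Nat.mul_le_mul_left _ (Sig_card_single_le _)
      _ = 2 * (Sig (↑(l.take t) : Multiset G)).card := Nat.mul_comm _ _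
  · push_neg at h
    rw [List.take_of_length_le h, List.take_of_length_le (h.trans (Nat.le_succ t))]
    omega
    
end

theorem partition_subset_sums {G : Type*} [AddCommGroup G] [DecidableEq G]
    (A : Multiset G) (k : ℕ) (hk : 2 ≤ k) :
    ∃ f : Fin k → Multiset G, (∑ i, f i) = A ∧
      ∀ i, (2 : ℝ) ^ ((1 : ℝ) / k - 1) *
          (((A.powerset.map Multiset.sum).toFinset.card : ℝ)) ^ ((1 : ℝ) / k) ≤
        (((f i).powerset.map Multiset.sum).toFinset.card : ℝ) := by
  classical
  set s : ℕ := (Sig A).card with hs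
  have hs1 : 1 ≤ s := Sig_card_pos A
  set l : List G := A.toList with hl
  set n : ℕ := l.length with hn
  set g : ℕ → ℕ := fun t => (Sig (↑(l.take t) : Multiset G)).card with hgdef
  have hcoel : (↑l : Multiset G) = A := by rw [hl]; exact Multiset.coe_toList A
  have hgn : g n = s := by
    simp only [hgdef, hn, List.take_length, hcoel, hs]
  have hg0 : g 0 = 1 := by simp [hgdef, Sig_zero]
  have hgmono : Monotone g := fun t t' h => Finset.card_le_card (Sig_mono (take_le_take l h))
  have hkpos : 0 < k := by omega
  have hk0 : (k:ℝ) ≠ 0 := Nat.cast_ne_zero.2 (by omega)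
  set sR : ℝ := (s:ℝ) with hsR
  have hsR1 : (1:ℝ) ≤ sR := by show (1:ℝ) ≤ (s:ℝ); exact_mod_cast hs1
  have h2s1 : (1:ℝ) ≤ 2*sR := by linarith
  have h2s0 : (0:ℝ) < 2*sR := by linarith
  set thr : ℕ → ℝ := fun j => (2*sR) ^ ((j:ℝ)/k) / 2 with hthrdef
  have hthr_pos : ∀ j, 0 < thr j := fun j => by
    simp only [hthrdef]
    positivity
  have hthr_mono : Monotone thr := by
    intro j j' h
    simp only [hthrdef]
    have : (2*sR) ^ ((j:ℝ)/k) ≤ (2*sR) ^ ((j':ℝ)/k) := by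
      apply Real.rpow_le_rpow_of_exponent_le h2s1
      gcongr
    linarith
  have hthrk : thr k = sR := by
    simp only [hthrdef]
    rw [div_self hk0, Real.rpow_one]
    ring
  have hthr_le_s : ∀ j, j ≤ k → thr j ≤ sR := fun j hj => by
    rw [← hthrk]; exact hthr_mono hj
  set T : ℕ → ℕ := fun j => if k ≤ j then n else sInf {t | ⌈thr j⌉₊ ≤ g t} with hTdef
  have hmem : ∀ j, j < k → n ∈ {t | ⌈thr j⌉₊ ≤ g t} := by
    intro j hj
    show ⌈thr j⌉₊ ≤ g n
    rw [hgn]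
    exact Nat.ceil_le.2 (hthr_le_s j hj.le)
  have hTlt : ∀ j, j < k → T j = sInf {t | ⌈thr j⌉₊ ≤ g t} := by
    intro j hj; simp only [hTdef, if_neg (by omega : ¬ k ≤ j)]
  have hTle : ∀ j, T j ≤ n := by
    intro j
    by_cases hj : k ≤ j
    · simp only [hTdef, if_pos hj]
      exact le_rfl
    · rw [hTlt j (by omega)]
      exact Nat.sInf_le (hmem j (by omega))
  have ha : ∀ j, j ≤ k → thr j ≤ (g (T j) : ℝ) := by
    intro j hj
    rcases eq_or_lt_of_le hj with rfl | hj
    · simp only [hTdef, if_pos le_rfl, hgn, hthrk, hsR, le_refl]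
    · rw [hTlt j hj]
      have : sInf {t | ⌈thr j⌉₊ ≤ g t} ∈ {t | ⌈thr j⌉₊ ≤ g t} :=
        Nat.sInf_mem ⟨n, hmem j hj⟩
      exact Nat.ceil_le.1 this
  have hb : ∀ j, j < k → (g (T j) : ℝ) ≤ 2 * thr j := by
    intro j hj
    rw [hTlt j hj]
    cases hT : sInf {t | ⌈thr j⌉₊ ≤ g t} with
    | zero =>
      rw [hg0]
      have h1 : (1:ℝ) ≤ (2*sR) ^ ((j:ℝ)/k) :=
        Real.one_le_rpow h2s1 (by positivity)
      simp only [hthrdef]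
      push_cast
      linarith
    | succ t =>
      have ht : t ∉ {t | ⌈thr j⌉₊ ≤ g t} := Nat.notMem_of_lt_sInf (by omega)
      have ht' : g t < ⌈thr j⌉₊ := not_le.1 ht
      have ht2 : (g t : ℝ) < thr j := Nat.lt_ceil.1 ht'
      have ht3 : g (t+1) ≤ 2 * g t := Sig_take_succ l t
      have : (g (t+1) : ℝ) ≤ 2 * (g t : ℝ) := by exact_mod_cast ht3
      linarith
  have hTmono : Monotone T := by
    intro j j' h
    by_cases hj' : k ≤ j'
    · rw [show T j' = n from by simp only [hTdef, if_pos hj']]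
      exact hTle j
    · have hj : ¬ k ≤ j := fun c => hj' (c.trans h)
      rw [hTlt j (by omega), hTlt j' (by omega)]
      apply Nat.sInf_le
      have hmem' : sInf {t | ⌈thr j'⌉₊ ≤ g t} ∈ {t | ⌈thr j'⌉₊ ≤ g t} :=
        Nat.sInf_mem ⟨n, hmem j' (by omega)⟩
      show ⌈thr j⌉₊ ≤ g (sInf {t | ⌈thr j'⌉₊ ≤ g t})
      exact le_trans (Nat.ceil_le_ceil (hthr_mono h)) hmem'
  have hT0 : T 0 = 0 := by
    rw [hTlt 0 (by omega)]
    have : 0 ∈ {t | ⌈thr 0⌉₊ ≤ g t} := by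
      show ⌈thr 0⌉₊ ≤ g 0
      rw [hg0]
      apply Nat.ceil_le.2
      simp only [hthrdef]
      push_cast
      rw [zero_div, Real.rpow_zero]
      norm_num
    exact Nat.le_zero.1 (Nat.sInf_le this)
  set P : ℕ → Multiset G := fun j => (↑(l.take (T j)) : Multiset G) with hPdef
  have hPmono : Monotone P := fun j j' h => take_le_take l (hTmono h)
  have hP0 : P 0 = 0 := by simp [hPdef, hT0]
  have hPk : P k = A := by
    simp only [hPdef, hTdef, if_pos le_rfl, hn, List.take_length, hcoel]
  have hgP : ∀ j, (Sig (P j)).card = g (T j) := fun j => rfl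
  refine ⟨fun i => P ((i:ℕ)+1) - P (i:ℕ), ?_, ?_⟩
  · rw [Fin.sum_univ_eq_sum_range (fun j => P (j+1) - P j) k,
      Finset.sum_range_tsub hPmono, hPk, hP0, tsub_zero]
  · intro i
    have hik : (i:ℕ) < k := i.2
    have hik1 : (i:ℕ)+1 ≤ k := hik
    have hsplit : P (i:ℕ) + (P ((i:ℕ)+1) - P (i:ℕ)) = P ((i:ℕ)+1) :=
      add_tsub_cancel_of_le (hPmono (Nat.le_succ _))
    set C : ℕ := (Sig (P ((i:ℕ)+1) - P (i:ℕ))).card with hC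
    have hCpos : 0 < C := Sig_card_pos _
    have hcard : g (T ((i:ℕ)+1)) ≤ g (T (i:ℕ)) * C := by
      rw [← hgP, ← hgP, ← hsplit]
      exact Sig_card_add_le _ _
    have hcardR : (g (T ((i:ℕ)+1)) : ℝ) ≤ (g (T (i:ℕ)) : ℝ) * (C : ℝ) := by
      exact_mod_cast hcard
    have h1 : thr ((i:ℕ)+1) ≤ (g (T ((i:ℕ)+1)) : ℝ) := ha _ hik1
    have h2 : (g (T (i:ℕ)) : ℝ) ≤ 2 * thr (i:ℕ) := hb _ hik
    have hCR : (0:ℝ) < (C:ℝ) := by exact_mod_cast hCpos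
    have key : thr ((i:ℕ)+1) ≤ (2 * thr (i:ℕ)) * (C:ℝ) := by
      calc thr ((i:ℕ)+1) ≤ (g (T ((i:ℕ)+1)) : ℝ) := h1
        _ ≤ (g (T (i:ℕ)) : ℝ) * (C : ℝ) := hcardR
        _ ≤ (2 * thr (i:ℕ)) * (C:ℝ) := by
            apply mul_le_mul_of_nonneg_right h2 hCR.le
    have hratio : thr ((i:ℕ)+1) = thr (i:ℕ) * (2*sR) ^ ((1:ℝ)/k) := by
      simp only [hthrdef]
      rw [div_mul_eq_mul_div, ← Real.rpow_add h2s0]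
      congr 2
      push_cast
      ring
    have hX : (2*sR) ^ ((1:ℝ)/k) ≤ 2 * (C:ℝ) := by
      rw [hratio] at key
      have hp := hthr_pos (i:ℕ)
      have := (mul_le_mul_iff_right₀ hp).1 (by linarith [key] : thr (i:ℕ) * ((2*sR) ^ ((1:ℝ)/k)) ≤ thr (i:ℕ) * (2 * (C:ℝ)))
      exact this
    have hgoal_eq : (2:ℝ) ^ ((1:ℝ)/k - 1) * sR ^ ((1:ℝ)/k) = (2*sR) ^ ((1:ℝ)/k) / 2 := by
      rw [Real.mul_rpow (by norm_num) (by linarith : (0:ℝ) ≤ sR),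
        Real.rpow_sub (by norm_num : (0:ℝ) < 2), Real.rpow_one]
      ring
    show (2:ℝ) ^ ((1:ℝ)/k - 1) * (s:ℝ) ^ ((1:ℝ)/k) ≤ (C:ℝ)
    rw [← hsR, hgoal_eq]
    linarith
end

section
/- For every polynomial P of degree k ≥ 1 with integer coefficients, every integer a, and all positive integers N and q, the number of indices 1 ≤ j ≤ N such that a + jq lies in the image P(ℤ) is at most (4τ(q))^{k-1}·N^{1/k}, where τ(q) is the number of positive divisors of q. -/
open Polynomial

noncomputable def Tset (P : Polynomial ℤ) (a : ℤ) (q N : ℕ) : Finset ℤ :=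
  (Finset.Icc 1 N).biUnion fun j => (P - C (a + (j:ℤ) * (q:ℤ))).roots.toFinset

lemma mem_Tset {P : Polynomial ℤ} (hP : P.natDegree ≠ 0) {a : ℤ} {q N : ℕ} {t : ℤ} :
    t ∈ Tset P a q N ↔ ∃ j ∈ Finset.Icc 1 N, P.eval t = a + (j:ℤ) * (q:ℤ) := by
  have hne : ∀ c : ℤ, P - C c ≠ 0 := by
    intro c h
    have := natDegree_sub_C (p := P) (a := c)
    rw [h, natDegree_zero] at this
    exact hP this.symm
  simp only [Tset, Finset.mem_biUnion, Multiset.mem_toFinset, mem_roots, hne, IsRoot.def,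
    ne_eq, not_false_iff, true_and, eval_sub, eval_C, sub_eq_zero]


lemma aux1 : ∀ k : ℕ, 2 ≤ k → (k:ℝ) + 2 ≤ 4 ^ (k-1) := by
  intro k hk
  induction k with
  | zero => omega
  | succ n ih =>
    rcases Nat.lt_or_ge n 2 with h | h
    · interval_cases n
      · omega
      · norm_num
    · have h1 := ih (by omega)
      have : n + 1 - 1 = (n - 1) + 1 := by omega
      rw [this, pow_succ]
      push_cast
      nlinarith [h1]

lemma rpow_one_le {N : ℕ} (hN : 1 ≤ N) (y : ℝ) (hy : 0 ≤ y) : (1:ℝ) ≤ (N:ℝ) ^ y := by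
  calc (1:ℝ) = 1 ^ y := (Real.one_rpow y).symm
    _ ≤ (N:ℝ) ^ y := Real.rpow_le_rpow (by norm_num) (by exact_mod_cast hN) hy

set_option maxHeartbeats 2000000 in
lemma key_step (k : ℕ) (hk : 1 ≤ k)
    (IH : ∀ P : Polynomial ℤ, P.natDegree = k → ∀ (a : ℤ) (q N : ℕ), 0 < q →
      ((Tset P a q N).card : ℝ) ≤ (4 * (q.divisors.card:ℝ))^(k-1) * (N:ℝ)^((1:ℝ)/k))
    (P : Polynomial ℤ) (hdeg : P.natDegree = k+1) (a : ℤ) (q N : ℕ) (hq : 0 < q) :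
    ((Tset P a q N).card : ℝ) ≤ (4 * (q.divisors.card:ℝ))^k * (N:ℝ)^((1:ℝ)/((k:ℝ)+1)) := by
  have hP1 : P.natDegree ≠ 0 := by omega
  by_cases hT : Tset P a q N = ∅
  · rw [hT]
    simp only [Finset.card_empty, Nat.cast_zero]
    positivity
  obtain ⟨t0, ht0⟩ := Finset.nonempty_of_ne_empty hT
  obtain ⟨j0, hj0N, hPt0⟩ := (mem_Tset hP1).1 ht0
  have hj0 := Finset.mem_Icc.1 hj0N
  have hN : 1 ≤ N := le_trans hj0.1 hj0.2
  -- the factorization P - C (P.eval t0) = (X - C t0) * R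
  obtain ⟨R, hR⟩ := X_sub_C_dvd_sub_C_eval (a := t0) (p := P)
  have hPC : (P - C (P.eval t0)) ≠ 0 := by
    intro h
    have := natDegree_sub_C (p := P) (a := P.eval t0)
    rw [h, natDegree_zero] at this
    omega
  have hRne : R ≠ 0 := by
    rintro rfl
    rw [mul_zero] at hR
    exact hPC hR
  have hRdeg : R.natDegree = k := by
    have h1 : (X - C t0 : Polynomial ℤ) ≠ 0 := X_sub_C_ne_zero t0
    have h2 := natDegree_mul h1 hRne
    rw [← hR, natDegree_sub_C, hdeg, natDegree_X_sub_C] at h2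
    omega
  have heval : ∀ t : ℤ, (t - t0) * R.eval t = P.eval t - P.eval t0 := by
    intro t
    have := congrArg (eval t) hR
    simpa using this.symm
  -- parameters
  set τ := q.divisors.card with hτdef
  set Xr : ℝ := (N:ℝ)^((1:ℝ)/((k:ℝ)+1)) with hXdef
  set u : ℕ := ⌊Xr⌋₊ with hudef
  set M : ℕ := (N-1)/(u+1) with hMdef
  set G : ℝ := (4 * (τ:ℝ))^(k-1) with hGdef
  set W : ℝ := (M:ℝ)^((1:ℝ)/(k:ℝ)) with hWdef
  -- per-divisor pieces
  set L : ℕ → Polynomial ℤ := fun d => R.comp (C (d:ℤ) * X + C t0) with hLdef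
  have hLdeg : ∀ d ∈ q.divisors, (L d).natDegree = k := by
    intro d hd
    have hd0 : d ≠ 0 := by
      rcases Nat.mem_divisors.1 hd with ⟨hdvd, hq0⟩
      intro h; rw [h] at hdvd; exact hq0 (Nat.eq_zero_of_zero_dvd hdvd)
    have : ((d:ℤ)) ≠ 0 := by exact_mod_cast hd0
    rw [hLdef]
    simp only []
    rw [natDegree_comp, natDegree_linear this, hRdeg, mul_one]
  have hLeval : ∀ d : ℕ, ∀ s : ℤ, (L d).eval s = R.eval ((d:ℤ)*s + t0) := by
    intro d s
    simp [hLdef, eval_comp]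
  set A : ℕ → Finset ℤ := fun d => ((Finset.Icc (-(u:ℤ)) (u:ℤ)).erase 0).image
      (fun s => (d:ℤ)*s + t0) with hAdef
  set Bp : ℕ → Finset ℤ := fun d => (Tset (L d) 0 (q/d) M).image (fun s => (d:ℤ)*s + t0)
      with hBpdef
  set Bn : ℕ → Finset ℤ := fun d =>
      (Tset (L d) (-((M:ℤ)+1)*((q/d : ℕ):ℤ)) (q/d) M).image (fun s => (d:ℤ)*s + t0) with hBndef
  set Z : Finset ℤ := (P - C (P.eval t0)).roots.toFinset with hZdef
  clear_value τ Xr u M G W L A Bp Bn Z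
  -- the covering
  have hcover : Tset P a q N ⊆ Z ∪ q.divisors.biUnion (fun d => A d ∪ Bp d ∪ Bn d) := by
    intro t ht
    obtain ⟨j, hjN, hPt⟩ := (mem_Tset hP1).1 ht
    have hj := Finset.mem_Icc.1 hjN
    by_cases hz : P.eval t = P.eval t0
    · apply Finset.mem_union_left
      rw [hZdef]
      simp only [Multiset.mem_toFinset, mem_roots, hPC, IsRoot.def, ne_eq, not_false_iff, true_and,
        eval_sub, eval_C, sub_eq_zero]
      exact hz
    apply Finset.mem_union_right
    -- set up divisor d, quotient s, cofactor m
    have hts : t - t0 ≠ 0 := by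
      intro h
      rw [sub_eq_zero] at h
      exact hz (by rw [h])
    set D : ℕ := Int.gcd (t - t0) (q:ℤ) with hDdef
    have hD0 : 0 < D := Int.gcd_pos_of_ne_zero_left _ hts
    have hDdvdq : D ∣ q := by
      have : ((D:ℤ)) ∣ (q:ℤ) := Int.gcd_dvd_right _ _
      exact_mod_cast this
    have hDmem : D ∈ q.divisors := Nat.mem_divisors.2 ⟨hDdvdq, hq.ne'⟩
    have hDdvdt : ((D:ℤ)) ∣ (t - t0) := Int.gcd_dvd_left _ _
    set s : ℤ := (t - t0) / (D:ℤ) with hsdef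
    have hsd : (D:ℤ) * s = t - t0 := Int.mul_ediv_cancel' hDdvdt
    have hs0 : s ≠ 0 := by
      intro h
      rw [h, mul_zero] at hsd
      exact hts hsd.symm
    set q' : ℕ := q / D with hq'def
    have hq'0 : 0 < q' := Nat.div_pos (Nat.le_of_dvd hq hDdvdq) hD0
    have hqq : (D:ℤ) * (q':ℤ) = (q:ℤ) := by
      exact_mod_cast congrArg (Nat.cast : ℕ → ℤ) (Nat.mul_div_cancel' hDdvdq)
    have hcop : Int.gcd s (q':ℤ) = 1 := by
      have h := Int.gcd_div_gcd_div_gcd (i := t - t0) (j := (q:ℤ)) hD0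
      have h2 : ((q:ℤ)) / ((D:ℤ)) = (q':ℤ) := by
        rw [hq'def]
        exact (Int.natCast_div q D).symm
      rw [h2] at h
      exact h
    -- main identity : s * R.eval t = (j - j0) * q'
    have hmain : s * R.eval t = ((j:ℤ) - (j0:ℤ)) * (q':ℤ) := by
      have h1 := heval t
      rw [hPt, hPt0] at h1
      have h2 : (D:ℤ) * (s * R.eval t) = (D:ℤ) * (((j:ℤ) - (j0:ℤ)) * (q':ℤ)) := by
        calc (D:ℤ) * (s * R.eval t) = (t - t0) * R.eval t := by rw [← hsd]; ring
          _ = (a + (j:ℤ)*(q:ℤ)) - (a + (j0:ℤ)*(q:ℤ)) := h1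
          _ = ((j:ℤ) - (j0:ℤ)) * (q:ℤ) := by ring
          _ = (D:ℤ) * (((j:ℤ) - (j0:ℤ)) * (q':ℤ)) := by rw [← hqq]; ring
      exact mul_left_cancel₀ (by exact_mod_cast hD0.ne') h2
    have hsdvd : s ∣ ((j:ℤ) - (j0:ℤ)) := by
      have h1 : s ∣ ((j:ℤ) - (j0:ℤ)) * (q':ℤ) := ⟨R.eval t, hmain.symm⟩
      have h2 : IsCoprime s ((q':ℕ):ℤ) := Int.isCoprime_iff_gcd_eq_one.2 hcop
      exact h2.dvd_of_dvd_mul_right h1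
    set m : ℤ := ((j:ℤ) - (j0:ℤ)) / s with hmdef
    have hms : s * m = (j:ℤ) - (j0:ℤ) := Int.mul_ediv_cancel' hsdvd
    have hRm : R.eval t = m * (q':ℤ) := by
      have h2 : s * R.eval t = s * (m * (q':ℤ)) := by
        rw [hmain, ← hms]; ring
      exact mul_left_cancel₀ hs0 h2
    have hjj0 : (j:ℤ) ≠ (j0:ℤ) := by
      intro h
      apply hz
      rw [hPt, hPt0, h]
    have hm0 : m ≠ 0 := by
      intro h
      rw [h, mul_zero] at hms
      exact hjj0 (by linarith [hms.symm])
    have habs : m.natAbs * s.natAbs ≤ N - 1 := by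
      have : (s * m).natAbs = m.natAbs * s.natAbs := by rw [Int.natAbs_mul]; ring
      rw [← this, hms]
      omega
    have hteq : (D:ℤ) * s + t0 = t := by linarith [hsd]
    rw [Finset.mem_biUnion]
    refine ⟨D, hDmem, ?_⟩
    by_cases hsu : s.natAbs ≤ u
    · -- small s : t ∈ A D
      apply Finset.mem_union_left
      apply Finset.mem_union_left
      rw [hAdef]
      simp only [Finset.mem_image, Finset.mem_erase, Finset.mem_Icc]
      exact ⟨s, ⟨hs0, by omega, by omega⟩, hteq⟩
    · -- large s
      push_neg at hsu
      have hmM : m.natAbs ≤ M := by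
        rw [hMdef]
        rw [Nat.le_div_iff_mul_le (by omega)]
        calc m.natAbs * (u+1) ≤ m.natAbs * s.natAbs := by
              apply Nat.mul_le_mul_left
              omega
          _ ≤ N - 1 := habs
      have hLd : (L D).natDegree ≠ 0 := by rw [hLdeg D hDmem]; omega
      have hLt : (L D).eval s = m * (q':ℤ) := by rw [hLeval, hteq, hRm]
      rcases lt_or_gt_of_ne hm0 with hmneg | hmpos
      · -- negative m : t ∈ Bn D
        apply Finset.mem_union_right
        rw [hBndef]
        simp only [Finset.mem_image]
        refine ⟨s, ?_, hteq⟩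
        rw [mem_Tset hLd]
        refine ⟨(m + M + 1).toNat, Finset.mem_Icc.2 ⟨?_, ?_⟩, ?_⟩
        · omega
        · omega
        · rw [hLt]
          have : (((m + (M:ℤ) + 1).toNat : ℕ) : ℤ) = m + M + 1 := by omega
          rw [this]
          ring
      · -- positive m : t ∈ Bp D
        apply Finset.mem_union_left
        apply Finset.mem_union_right
        rw [hBpdef]
        simp only [Finset.mem_image]
        refine ⟨s, ?_, hteq⟩
        rw [mem_Tset hLd]
        refine ⟨m.toNat, Finset.mem_Icc.2 ⟨by omega, by omega⟩, ?_⟩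
        rw [hLt]
        have : ((m.toNat : ℕ) : ℤ) = m := by omega
        rw [this]
        ring

  -- counting
  have hZcard : Z.card ≤ k + 1 := by
    rw [hZdef]
    calc (P - C (P.eval t0)).roots.toFinset.card ≤ Multiset.card (P - C (P.eval t0)).roots := Multiset.toFinset_card_le _
      _ ≤ (P - C (P.eval t0)).natDegree := card_roots' _
      _ = k + 1 := by rw [natDegree_sub_C, hdeg]
  have hAcard : ∀ d : ℕ, (A d).card ≤ 2*u := by
    intro d
    simp only [hAdef]
    calc ((((Finset.Icc (-(u:ℤ)) (u:ℤ)).erase 0)).image (fun s => (d:ℤ)*s + t0)).card ≤ ((Finset.Icc (-(u:ℤ)) (u:ℤ)).erase 0).card := Finset.card_image_le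
      _ = 2*u := by
          rw [Finset.card_erase_of_mem (by simp [Finset.mem_Icc]), Int.card_Icc]
          omega
  have hW0 : 0 ≤ W := by rw [hWdef]; positivity
  have hG0 : 0 ≤ G := by rw [hGdef]; positivity
  have hBcard : ∀ d ∈ q.divisors, ((Bp d).card : ℝ) ≤ G * W ∧ ((Bn d).card : ℝ) ≤ G * W := by
    intro d hd
    rcases Nat.mem_divisors.1 hd with ⟨hdvd, hq0⟩
    have hqd : 0 < q / d := Nat.div_pos (Nat.le_of_dvd hq hdvd)
      (Nat.pos_of_ne_zero (by rintro rfl; exact hq0 (Nat.eq_zero_of_zero_dvd hdvd)))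
    have hτ' : ((q/d).divisors.card : ℝ) ≤ (τ:ℝ) := by
      rw [hτdef]
      have := Finset.card_le_card (Nat.divisors_subset_of_dvd hq.ne' (Nat.div_dvd_of_dvd hdvd))
      exact_mod_cast this
    have hpow : (4 * ((q/d).divisors.card:ℝ))^(k-1) ≤ G := by
      rw [hGdef]
      apply pow_le_pow_left₀ (by positivity)
      nlinarith [hτ']
    have hIHp := IH (L d) (hLdeg d hd) 0 (q/d) M hqd
    have hIHn := IH (L d) (hLdeg d hd) (-((M:ℤ)+1)*((q/d : ℕ):ℤ)) (q/d) M hqd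
    rw [← hWdef] at hIHp hIHn
    constructor
    · simp only [hBpdef]
      calc (((Tset (L d) 0 (q/d) M).image (fun s => (d:ℤ)*s + t0)).card : ℝ)
          ≤ ((Tset (L d) 0 (q/d) M).card : ℝ) := by
            exact_mod_cast Finset.card_image_le
        _ ≤ (4 * ((q/d).divisors.card:ℝ))^(k-1) * W := hIHp
        _ ≤ G * W := mul_le_mul_of_nonneg_right hpow hW0
    · simp only [hBndef]
      calc (((Tset (L d) (-((M:ℤ)+1)*((q/d : ℕ):ℤ)) (q/d) M).image (fun s => (d:ℤ)*s + t0)).card : ℝ)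
          ≤ ((Tset (L d) (-((M:ℤ)+1)*((q/d : ℕ):ℤ)) (q/d) M).card : ℝ) := by
            exact_mod_cast Finset.card_image_le
        _ ≤ (4 * ((q/d).divisors.card:ℝ))^(k-1) * W := hIHn
        _ ≤ G * W := mul_le_mul_of_nonneg_right hpow hW0
  have h1 : (Tset P a q N).card ≤ Z.card + ∑ d ∈ q.divisors, ((A d).card + ((Bp d).card + (Bn d).card)) := by
    calc (Tset P a q N).card ≤ (Z ∪ q.divisors.biUnion (fun d => A d ∪ Bp d ∪ Bn d)).card :=
          Finset.card_le_card hcover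
      _ ≤ Z.card + (q.divisors.biUnion (fun d => A d ∪ Bp d ∪ Bn d)).card :=
          Finset.card_union_le _ _
      _ ≤ Z.card + ∑ d ∈ q.divisors, (A d ∪ Bp d ∪ Bn d).card :=
          Nat.add_le_add_left Finset.card_biUnion_le _
      _ ≤ Z.card + ∑ d ∈ q.divisors, ((A d).card + ((Bp d).card + (Bn d).card)) := by
          refine Nat.add_le_add_left (Finset.sum_le_sum fun d _ => ?_) _
          calc (A d ∪ Bp d ∪ Bn d).card ≤ (A d ∪ Bp d).card + (Bn d).card :=
                Finset.card_union_le _ _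
            _ ≤ (A d).card + (Bp d).card + (Bn d).card :=
                Nat.add_le_add_right (Finset.card_union_le _ _) _
            _ = (A d).card + ((Bp d).card + (Bn d).card) := by omega
  have h2 : ((Tset P a q N).card : ℝ) ≤ ((k:ℝ)+1) + (τ:ℝ) * (2*(u:ℝ) + 2*(G*W)) := by
    have hsum : ∑ d ∈ q.divisors, (((A d).card : ℝ) + (((Bp d).card:ℝ) + ((Bn d).card:ℝ)))
        ≤ (τ:ℝ) * (2*(u:ℝ) + 2*(G*W)) := by
      calc ∑ d ∈ q.divisors, (((A d).card : ℝ) + (((Bp d).card:ℝ) + ((Bn d).card:ℝ)))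
          ≤ ∑ _d ∈ q.divisors, (2*(u:ℝ) + 2*(G*W)) := by
            refine Finset.sum_le_sum fun d hd => ?_
            have hB := hBcard d hd
            have hA : ((A d).card : ℝ) ≤ 2*(u:ℝ) := by exact_mod_cast hAcard d
            linarith [hB.1, hB.2]
        _ = (τ:ℝ) * (2*(u:ℝ) + 2*(G*W)) := by
            rw [Finset.sum_const, hτdef, nsmul_eq_mul]
    have h1' : ((Tset P a q N).card : ℝ) ≤ (Z.card : ℝ) +
        ∑ d ∈ q.divisors, (((A d).card : ℝ) + (((Bp d).card:ℝ) + ((Bn d).card:ℝ))) := by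
      exact_mod_cast h1
    have hZ' : (Z.card : ℝ) ≤ (k:ℝ)+1 := by exact_mod_cast hZcard
    linarith
  -- endgame
  have hτ1 : 1 ≤ (τ:ℝ) := by
    rw [hτdef]
    have : 0 < q.divisors.card := Finset.card_pos.2 ⟨q, Nat.mem_divisors.2 ⟨dvd_rfl, hq.ne'⟩⟩
    exact_mod_cast this
  have hN0' : (0:ℝ) < (N:ℝ) := by exact_mod_cast hN
  have hX1 : 1 ≤ Xr := by
    rw [hXdef]
    calc (1:ℝ) = 1 ^ ((1:ℝ)/((k:ℝ)+1)) := (Real.one_rpow _).symm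
      _ ≤ (N:ℝ) ^ ((1:ℝ)/((k:ℝ)+1)) := by
          apply Real.rpow_le_rpow (by norm_num) (by exact_mod_cast hN) (by positivity)
  have huX : (u:ℝ) ≤ Xr := by rw [hudef]; exact Nat.floor_le (by linarith)
  have hXu : Xr < (u:ℝ) + 1 := by
    have := Nat.lt_floor_add_one Xr
    rw [← hudef] at this
    exact_mod_cast this
  have hMu : (M:ℝ) * ((u:ℝ)+1) ≤ (N:ℝ) - 1 := by
    have h3 : M * (u+1) ≤ N - 1 := by rw [hMdef]; exact Nat.div_mul_le_self _ _
    have h4 : ((M * (u+1) : ℕ) : ℝ) ≤ ((N - 1 : ℕ):ℝ) := by exact_mod_cast h3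
    rw [Nat.cast_sub hN] at h4
    push_cast at h4
    linarith
  rcases eq_or_lt_of_le hk with hk1 | hk2
  · -- k = 1
    subst hk1
    have hXsq : Xr * Xr = (N:ℝ) := by
      rw [hXdef, ← Real.rpow_add hN0']
      have h9 : (1:ℝ)/(((1:ℕ):ℝ)+1) + (1:ℝ)/(((1:ℕ):ℝ)+1) = 1 := by norm_num
      rw [h9, Real.rpow_one]
    have hW1 : W = (M:ℝ) := by
      rw [hWdef]
      have h9 : (1:ℝ)/((1:ℕ):ℝ) = 1 := by norm_num
      rw [h9, Real.rpow_one]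
    have step1 : 2*(u:ℝ) + 2*(M:ℝ) ≤ 4*Xr - 2 := by
      nlinarith [sq_nonneg ((u:ℝ)+1-Xr), hMu, hXu, huX, hXsq, hX1, Nat.cast_nonneg (α := ℝ) M]
    have hG1 : G = 1 := by rw [hGdef]; norm_num
    rw [hG1, one_mul] at h2
    rw [hW1] at h2
    rw [pow_one]
    have hone : ((1:ℕ):ℝ) = 1 := Nat.cast_one
    rw [hone] at h2
    nlinarith [mul_le_mul_of_nonneg_left step1 (by linarith : (0:ℝ) ≤ (τ:ℝ)), h2, hτ1, hX1]
  · -- k ≥ 2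
    have hk2' : 2 ≤ k := hk2
    have hGk : (k:ℝ) + 2 ≤ G := by
      calc (k:ℝ) + 2 ≤ 4^(k-1) := aux1 k hk2'
        _ ≤ G := by
            rw [hGdef]
            apply pow_le_pow_left₀ (by norm_num)
            nlinarith [hτ1]
    have hWX : W ≤ Xr := by
      have hMN : (M:ℝ) * Xr ≤ (N:ℝ) := by nlinarith [hMu, hXu, Nat.cast_nonneg (α := ℝ) M]
      have hXpos : 0 < Xr := by linarith
      have hM2 : (M:ℝ) ≤ (N:ℝ) ^ (1 - (1:ℝ)/((k:ℝ)+1)) := by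
        rw [Real.rpow_sub hN0', Real.rpow_one, ← hXdef]
        rw [le_div_iff₀ hXpos]
        exact hMN
      have hk0 : (k:ℝ) ≠ 0 := by positivity
      have hk10 : (k:ℝ) + 1 ≠ 0 := by positivity
      calc W ≤ ((N:ℝ) ^ (1 - (1:ℝ)/((k:ℝ)+1))) ^ ((1:ℝ)/(k:ℝ)) := by
            rw [hWdef]
            exact Real.rpow_le_rpow (Nat.cast_nonneg M) hM2 (by positivity)
        _ = (N:ℝ) ^ ((1 - (1:ℝ)/((k:ℝ)+1)) * ((1:ℝ)/(k:ℝ))) := by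
            rw [← Real.rpow_mul (le_of_lt hN0')]
        _ = Xr := by
            rw [hXdef]
            congr 1
            field_simp
            ring
    have hpowk : (4*(τ:ℝ))^k = G * (4*(τ:ℝ)) := by
      rw [hGdef, ← pow_succ]
      congr 1
      omega
    rw [hpowk]
    have hτX : 1 ≤ (τ:ℝ) * Xr := by nlinarith [hτ1, hX1]
    have h5 : ((k:ℝ)+1) ≤ 2*((τ:ℝ)*Xr)*(G-1) := by nlinarith [hτX, hGk, Nat.cast_nonneg (α := ℝ) k]
    have h6 : (τ:ℝ)*(2*(u:ℝ)) ≤ 2*((τ:ℝ)*Xr) := by nlinarith [huX, hτ1]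
    have h7 : (τ:ℝ)*(2*(G*W)) ≤ 2*((τ:ℝ)*Xr)*G := by
      nlinarith [mul_le_mul_of_nonneg_left hWX (by positivity : (0:ℝ) ≤ 2*(τ:ℝ)*G)]
    nlinarith [h2, h5, h6, h7]


lemma key : ∀ k : ℕ, 1 ≤ k → ∀ P : Polynomial ℤ, P.natDegree = k → ∀ (a : ℤ) (q N : ℕ), 0 < q →
    ((Tset P a q N).card : ℝ) ≤ (4 * (q.divisors.card:ℝ))^(k-1) * (N:ℝ)^((1:ℝ)/(k:ℝ)) := by
  intro k hk
  induction k, hk using Nat.le_induction with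
  | base =>
    intro P h1 a q N hq
    have hcard : (Tset P a q N).card ≤ N := by
      have hne : ∀ c : ℤ, P - C c ≠ 0 := by
        intro c h
        have := natDegree_sub_C (p := P) (a := c)
        rw [h, natDegree_zero] at this
        omega
      calc (Tset P a q N).card
          ≤ ∑ j ∈ Finset.Icc 1 N, (P - C (a + (j:ℤ)*(q:ℤ))).roots.toFinset.card :=
            Finset.card_biUnion_le
        _ ≤ ∑ j ∈ Finset.Icc 1 N, 1 := by
            refine Finset.sum_le_sum fun j _ => ?_
            calc (P - C (a + (j:ℤ)*(q:ℤ))).roots.toFinset.card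
                ≤ Multiset.card (P - C (a + (j:ℤ)*(q:ℤ))).roots := Multiset.toFinset_card_le _
              _ ≤ (P - C (a + (j:ℤ)*(q:ℤ))).natDegree := card_roots' _
              _ = 1 := by rw [natDegree_sub_C, h1]
        _ = N := by simp
    have h2 : ((1:ℝ)/((1:ℕ):ℝ)) = 1 := by norm_num
    rw [h2, Real.rpow_one]
    norm_num
    exact_mod_cast hcard
  | succ k hk IH =>
    intro P hdeg a q N hq
    have := key_step k hk (fun P h a q N hq => IH P h a q N hq) P hdeg a q N hq
    convert this using 3
    push_cast
    ring
    norm_num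

open scoped Classical in
theorem polynomial_values_in_ap (P : Polynomial ℤ) (k : ℕ) (hk : 1 ≤ k)
    (hdeg : P.natDegree = k) (a : ℤ) (N q : ℕ) (hN : 0 < N) (hq : 0 < q) :
    (((Finset.Icc 1 N).filter
        (fun j => ∃ t : ℤ, P.eval t = a + (j : ℤ) * (q : ℤ))).card : ℝ)
      ≤ (4 * (q.divisors.card : ℝ)) ^ (k - 1) * (N : ℝ) ^ ((1 : ℝ) / k) := by
  have hP1 : P.natDegree ≠ 0 := by omega
  refine le_trans ?_ (key k hk P hdeg a q N hq)
  rw [Nat.cast_le]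
  apply Finset.card_le_card_of_injOn
    (fun (j : ℤ) => if h : ∃ t : ℤ, P.eval t = a + j * (q : ℤ) then h.choose else 0)
  · intro j hj
    rw [Finset.mem_coe, Finset.mem_filter] at hj
    obtain ⟨hjS, hex⟩ := hj
    simp only [Finset.pure_def, Finset.bind_def, Finset.sup_singleton_apply, Finset.mem_image,
      Finset.mem_Icc] at hjS
    obtain ⟨n, hn, rfl⟩ := hjS
    simp only [dif_pos hex]
    rw [Finset.mem_coe, mem_Tset hP1]
    exact ⟨n, Finset.mem_Icc.2 hn, hex.choose_spec⟩
  · intro j1 hj1 j2 hj2 heq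
    rw [Finset.mem_coe, Finset.mem_filter] at hj1 hj2
    obtain ⟨_, h1⟩ := hj1
    obtain ⟨_, h2⟩ := hj2
    simp only [dif_pos h1, dif_pos h2] at heq
    have e1 := h1.choose_spec
    have e2 := h2.choose_spec
    rw [heq, e2] at e1
    have hq0 : (q:ℤ) ≠ 0 := by exact_mod_cast hq.ne'
    have : j1 * (q:ℤ) = j2 * (q:ℤ) := by linarith
    exact mul_right_cancel₀ hq0 this
end

section
/- Let k ≥ 2 and N ≥ 1. Define Q_k(N; q, a) as the number of k-th powers among a+q, a+2q, …, a+Nq. If a ∈ ℤ and q ≥ 1 satisfy gcd(a,q) > 1 and Q_k(N;q,a) ≥ 2, then there exist a' ∈ ℤ and q' ≥ 1 with Q_k(N;q,a) ≤ Q_k(N;q',a') and gcd(a',q') < gcd(a,q). -/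
open scoped Classical

private lemma step_lemma (k N : ℕ) (hk : 2 ≤ k) (a q : ℤ) (hq : 1 ≤ q)
    (hgcd : 1 < Int.gcd a q)
    (hne : ((Finset.Icc 1 N).filter
      (fun j => ∃ x : ℤ, x ^ k = a + (j : ℤ) * q)).Nonempty) :
    ∃ a' q' : ℤ, 1 ≤ q' ∧ q' < q ∧
      ((Finset.Icc 1 N).filter (fun j => ∃ x : ℤ, x ^ k = a + (j : ℤ) * q)).card ≤
      ((Finset.Icc 1 N).filter (fun j => ∃ x : ℤ, x ^ k = a' + (j : ℤ) * q')).card := by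
  obtain ⟨p, hp, hpd⟩ := Nat.exists_prime_and_dvd (n := Int.gcd a q) (by omega)
  have hpa : (p:ℤ) ∣ a := (Int.natCast_dvd_natCast.mpr hpd).trans (Int.gcd_dvd_left _ _)
  have hpq : (p:ℤ) ∣ q := (Int.natCast_dvd_natCast.mpr hpd).trans (Int.gcd_dvd_right _ _)
  have hpZ : Prime (p:ℤ) := Nat.prime_iff_prime_int.mp hp
  have hp2 : 2 ≤ p := hp.two_le
  set P : ℕ → Prop := fun m => (p:ℤ)^m ∣ q with hP
  set m := Nat.findGreatest P k with hm
  have hP1 : P 1 := by simpa [P] using hpq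
  have hm1 : 1 ≤ m := Nat.le_findGreatest (by omega) hP1
  have hmk : m ≤ k := Nat.findGreatest_le k
  have hmdvd : (p:ℤ)^m ∣ q := Nat.findGreatest_spec (m := 1) (by omega) hP1
  obtain ⟨q0, hq0⟩ := hmdvd
  have hpmpos : (0:ℤ) < (p:ℤ)^m := by positivity
  have hq0pos : 1 ≤ q0 := by nlinarith [hq, hq0, hpmpos]
  have hpm2 : (2:ℤ) ≤ (p:ℤ)^m := by
    calc (2:ℤ) ≤ (p:ℤ) := by exact_mod_cast hp2
    _ ≤ (p:ℤ)^m := le_self_pow₀ (by exact_mod_cast Nat.one_le_of_lt hp2) (by omega)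
  have hq0lt : q0 < q := by nlinarith [hq0pos, hpm2, hq0]
  set r := k - m with hr
  have hprpos : (0:ℤ) < (p:ℤ)^r := by positivity
  have hpkr : (p:ℤ)^r * (p:ℤ)^m = (p:ℤ)^k := by rw [← pow_add]; congr 1; omega
  have hcancel : ∀ c : ℤ, (p:ℤ)^k ∣ c * q → (p:ℤ)^r ∣ c := by
    intro c hc
    rcases eq_or_lt_of_le hmk with heq | hlt
    · have : r = 0 := by omega
      simp [this]
    · have hnd : ¬ P (m + 1) :=
        Nat.findGreatest_is_greatest (n := k) (Nat.lt_succ_self m) (by omega)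
      have hpq0 : ¬ (p:ℤ) ∣ q0 := by
        intro hd
        apply hnd
        obtain ⟨c', hc'⟩ := hd
        exact ⟨c', by rw [hq0, hc']; ring⟩
      have hcop : IsCoprime ((p:ℤ)^r) q0 := (hpZ.coprime_iff_not_dvd.mpr hpq0).pow_left
      have h2 : (p:ℤ)^r * (p:ℤ)^m ∣ (c * q0) * (p:ℤ)^m := by
        rw [hpkr]
        calc (p:ℤ)^k ∣ c * q := hc
        _ = (c * q0) * (p:ℤ)^m := by rw [hq0]; ring
      have h3 : (p:ℤ)^r ∣ c * q0 :=
        (mul_dvd_mul_iff_right hpmpos.ne').mp h2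
      exact hcop.dvd_of_dvd_mul_right h3
  have hmem : ∀ b c j : ℤ, (j ∈ (Finset.Icc 1 N).filter
      (fun j => ∃ x : ℤ, x ^ k = b + (j : ℤ) * c)) ↔
      (1 ≤ j ∧ j ≤ (N:ℤ)) ∧ ∃ x : ℤ, x ^ k = b + j * c := by
    intro b c j
    rw [Finset.mem_filter]
    constructor
    · rintro ⟨h1, h2⟩
      refine ⟨?_, h2⟩
      simp at h1
      obtain ⟨n, hn, rfl⟩ := h1
      omega
    · rintro ⟨⟨ha, hb⟩, h2⟩
      refine ⟨?_, h2⟩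
      simp
      exact ⟨j.toNat, by omega, by omega⟩
  set S := (Finset.Icc 1 N).filter (fun j => ∃ x : ℤ, x ^ k = a + (j : ℤ) * q) with hS
  have hmemS : ∀ j : ℤ, j ∈ S ↔ (1 ≤ j ∧ j ≤ (N:ℤ)) ∧ ∃ x : ℤ, x ^ k = a + j * q := by
    intro j; rw [hS]; exact hmem a q j
  have hpow : ∀ j ∈ S, (p:ℤ)^k ∣ a + j * q := by
    intro j hj
    obtain ⟨x, hx⟩ := ((hmemS j).mp hj).2
    have hpx : (p:ℤ) ∣ x := hpZ.dvd_of_dvd_pow (n := k)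
      (by rw [hx]; exact dvd_add hpa (Dvd.dvd.mul_left hpq _))
    rw [← hx]
    exact pow_dvd_pow_of_dvd hpx k
  set j₀ := S.min' hne with hj₀
  have hj₀S : j₀ ∈ S := S.min'_mem hne
  have hj₀b : 1 ≤ j₀ ∧ j₀ ≤ (N:ℤ) := ((hmemS j₀).mp hj₀S).1
  obtain ⟨A, hA⟩ := hpow j₀ hj₀S
  have hrep : ∀ j ∈ S, j₀ ≤ j ∧ ((j - j₀)/(p:ℤ)^r) * (p:ℤ)^r = j - j₀ := by
    intro j hj
    have hj0le : j₀ ≤ j := S.min'_le j hj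
    refine ⟨hj0le, ?_⟩
    apply Int.ediv_mul_cancel
    apply hcancel
    have heq : (j - j₀) * q = (a + j*q) - (a + j₀*q) := by ring
    rw [heq]
    exact dvd_sub (hpow j hj) (hpow j₀ hj₀S)
  refine ⟨A - q0, q0, hq0pos, hq0lt, ?_⟩
  apply Finset.card_le_card_of_injOn (fun j => (j - j₀)/(p:ℤ)^r + 1)
  · intro j hj
    obtain ⟨hj0le, htm⟩ := hrep j hj
    obtain ⟨⟨hj1, hjN⟩, hx0⟩ := (hmemS j).mp hj
    set t := (j - j₀) / (p:ℤ)^r with ht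
    have htnn : 0 ≤ t := Int.ediv_nonneg (by linarith) (le_of_lt hprpos)
    have htle : t ≤ j - j₀ := Int.ediv_le_self _ (by linarith)
    rw [Finset.mem_coe, hmem (A - q0) q0]
    refine ⟨⟨by linarith, by linarith [hj₀b.1]⟩, ?_⟩
    obtain ⟨x, hx⟩ := hx0
    have hpx : (p:ℤ) ∣ x := hpZ.dvd_of_dvd_pow (n := k)
      (by rw [hx]; exact dvd_add hpa (Dvd.dvd.mul_left hpq _))
    obtain ⟨y, hy⟩ := hpx
    refine ⟨y, ?_⟩
    have hjeq : j = j₀ + t * (p:ℤ)^r := by linarith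
    have hexp : a + j*q = (p:ℤ)^k * (A + t*q0) := by
      calc a + j*q = (a + j₀*q) + t * (p:ℤ)^r * q := by rw [hjeq]; ring
      _ = (p:ℤ)^k*A + t * (p:ℤ)^r * ((p:ℤ)^m * q0) := by rw [hA, ← hq0]
      _ = (p:ℤ)^k * (A + t*q0) := by rw [← hpkr]; ring
    have hpy : (p:ℤ)^k * y^k = (p:ℤ)^k * (A + t*q0) := by
      rw [← mul_pow, ← hy, hx, hexp]
    have hyy : y^k = A + t*q0 := mul_left_cancel₀ (by positivity) hpy
    rw [hyy]
    ring
  · intro j hj j' hj' heq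
    obtain ⟨h1, h2⟩ := hrep j hj
    obtain ⟨h1', h2'⟩ := hrep j' hj'
    simp only [add_left_inj] at heq
    have : (j - j₀)/(p:ℤ)^r * (p:ℤ)^r = (j' - j₀)/(p:ℤ)^r * (p:ℤ)^r := by rw [heq]
    rw [h2, h2'] at this
    linarith

private lemma aux_lemma (k N : ℕ) (hk : 2 ≤ k) :
    ∀ n : ℕ, ∀ a q : ℤ, 1 ≤ q → q.toNat ≤ n →
      (((Finset.Icc 1 N).filter
        (fun j => ∃ x : ℤ, x ^ k = a + (j : ℤ) * q)).Nonempty) →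
      ∃ a' q' : ℤ, 1 ≤ q' ∧
        ((Finset.Icc 1 N).filter (fun j => ∃ x : ℤ, x ^ k = a + (j : ℤ) * q)).card ≤
        ((Finset.Icc 1 N).filter (fun j => ∃ x : ℤ, x ^ k = a' + (j : ℤ) * q')).card ∧
        Int.gcd a' q' = 1 := by
  intro n
  induction n with
  | zero => intro a q hq hle _; omega
  | succ n ih =>
    intro a q hq hle hne
    by_cases hg : Int.gcd a q = 1
    · exact ⟨a, q, hq, le_refl _, hg⟩
    · have hqne : q ≠ 0 := by omega
      have hg0 : Int.gcd a q ≠ 0 := by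
        intro h
        exact hqne (Int.gcd_eq_zero_iff.mp h).2
      have hg1 : 1 < Int.gcd a q := by omega
      obtain ⟨a', q', hq', hlt, hcard⟩ := step_lemma k N hk a q hq hg1 hne
      have hne' : ((Finset.Icc 1 N).filter
          (fun j => ∃ x : ℤ, x ^ k = a' + (j : ℤ) * q')).Nonempty :=
        Finset.card_pos.mp (lt_of_lt_of_le (Finset.card_pos.mpr hne) hcard)
      obtain ⟨a'', q'', h1, h2, h3⟩ := ih a' q' hq' (by omega) hne'
      exact ⟨a'', q'', h1, le_trans hcard h2, h3⟩

open scoped Classical in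
theorem kth_powers_in_ap_reduce_gcd (k N : ℕ) (hk : 2 ≤ k) (hN : 1 ≤ N)
    (a q : ℤ) (hq : 1 ≤ q) (hgcd : 1 < Int.gcd a q)
    (hQ : 2 ≤ ((Finset.Icc 1 N).filter
        (fun j => ∃ x : ℤ, x ^ k = a + (j : ℤ) * q)).card) :
    ∃ (a' q' : ℤ), 1 ≤ q' ∧
      ((Finset.Icc 1 N).filter (fun j => ∃ x : ℤ, x ^ k = a + (j : ℤ) * q)).card ≤
        ((Finset.Icc 1 N).filter (fun j => ∃ x : ℤ, x ^ k = a' + (j : ℤ) * q')).card ∧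
      Int.gcd a' q' < Int.gcd a q := by
  have hne : ((Finset.Icc 1 N).filter
      (fun j => ∃ x : ℤ, x ^ k = a + (j : ℤ) * q)).Nonempty :=
    Finset.card_pos.mp (by omega)
  obtain ⟨a', q', h1, h2, h3⟩ := aux_lemma k N hk q.toNat a q hq (le_refl _) hne
  exact ⟨a', q', h1, h2, by omega⟩
end

section
/- There exists an absolute constant K' > 0 such that for every prime p, every a_0 ∈ ℤ/p²ℤ, and every finite multiset A of elements of ℤ/p²ℤ \ {0, p, 2p, …, (p-1)p} with a_0 + Σ*(A) disjoint from {p, 2p, …, (p-1)p}, one has |A| ≤ K'·p. -/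
open Multiset

lemma ms_exists_le_card {α : Type*} (S : Multiset α) (n : ℕ) (h : n ≤ Multiset.card S) :
    ∃ T, T ≤ S ∧ Multiset.card T = n := by
  refine ⟨((S.toList.take n : List α) : Multiset α), ?_, ?_⟩
  · calc ((S.toList.take n : List α) : Multiset α) ≤ (S.toList : Multiset α) :=
      Multiset.coe_le.mpr (S.toList.take_sublist n).subperm
    _ = S := S.coe_toList
  · rw [Multiset.coe_card, List.length_take, Multiset.length_toList]
    omega

lemma zmod_ker {p : ℕ} (hp : p.Prime) (x : ZMod (p^2)) :
    (ZMod.castHom (dvd_pow_self p two_ne_zero) (ZMod p)) x = 0 ↔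
      ∃ y : ZMod (p^2), x = (p : ZMod (p^2)) * y := by
  haveI : NeZero (p^2) := ⟨pow_ne_zero 2 hp.ne_zero⟩
  constructor
  · intro h
    have hval : ((x.val : ℕ) : ZMod p) = 0 := by
      rwa [ZMod.castHom_apply, ← ZMod.natCast_val] at h
    obtain ⟨k, hk⟩ := (ZMod.natCast_eq_zero_iff _ _).mp hval
    refine ⟨(k : ZMod (p^2)), ?_⟩
    calc x = ((x.val : ℕ) : ZMod (p^2)) := (ZMod.natCast_zmod_val x).symm
    _ = _ := by rw [hk]; push_cast; ring
  · rintro ⟨y, rfl⟩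
    rw [map_mul, map_natCast, ZMod.natCast_self, zero_mul]

lemma zmod_pmul {p : ℕ} (hp : p.Prime) (x : ZMod (p^2)) (h : (p : ZMod (p^2)) * x = 0) :
    (ZMod.castHom (dvd_pow_self p two_ne_zero) (ZMod p)) x = 0 := by
  haveI : NeZero (p^2) := ⟨pow_ne_zero 2 hp.ne_zero⟩
  have h2 : ((p * x.val : ℕ) : ZMod (p^2)) = 0 := by
    push_cast [ZMod.natCast_zmod_val]; exact h
  obtain ⟨k, hk⟩ := (ZMod.natCast_eq_zero_iff _ _).mp h2
  have hk2 : p * x.val = p * (p * k) := by rw [hk]; ring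
  have hdvd : p ∣ x.val := ⟨k, Nat.eq_of_mul_eq_mul_left hp.pos hk2⟩
  rw [ZMod.castHom_apply, ← ZMod.natCast_val]
  exact (ZMod.natCast_eq_zero_iff _ _).mpr hdvd

open Multiset

lemma subsums_univ {p : ℕ} (hp : p.Prime) {R : Type} [CommRing R] (f : R →+* ZMod p)
    (S : Multiset R) (hS : ∀ x ∈ S, f x ≠ 0) (hcard : p - 1 ≤ Multiset.card S)
    (t : ZMod p) (ht : t ≠ 0) : ∃ u, u ≤ S ∧ u ≠ 0 ∧ f u.sum = t := by
  haveI := Fact.mk hp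
  classical
  set g : Multiset R → Finset (ZMod p) :=
    fun s => s.powerset.toFinset.image (fun u => f u.sum) with hg
  have hzero : ∀ s : Multiset R, (0 : ZMod p) ∈ g s := by
    intro s
    apply Finset.mem_image.mpr
    exact ⟨0, by simp [Multiset.mem_toFinset, Multiset.mem_powerset], by simp⟩
  have hgrow : ∀ s : Multiset R, (∀ x ∈ s, f x ≠ 0) →
      min p (Multiset.card s + 1) ≤ (g s).card := by
    intro s
    induction s using Multiset.induction_on with
    | empty =>
      intro _
      have : (0 : ZMod p) ∈ g 0 := hzero 0
      have h1 : 1 ≤ (g 0).card := Finset.card_pos.mpr ⟨0, this⟩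
      simpa using le_trans (min_le_right _ _) h1
    | cons a s ih =>
      intro hmem
      have ha : f a ≠ 0 := hmem a (Multiset.mem_cons_self a s)
      have ihs := ih (fun x hx => hmem x (Multiset.mem_cons_of_mem hx))
      have hsplit : g (a ::ₘ s) = g s ∪ (g s).image (fun x => f a + x) := by
        rw [hg]
        simp only [Multiset.powerset_cons, Multiset.toFinset_add, Finset.image_union,
          Multiset.toFinset_map, Finset.image_image]
        congr 1
        apply Finset.image_congr
        intro u _
        simp [Function.comp, Multiset.sum_cons]
      by_cases hsub : (g s).image (fun x => f a + x) ⊆ g s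
      · -- g s is closed under adding f a, hence equals univ
        have hcl : ∀ y ∈ g s, f a + y ∈ g s := fun y hy =>
          hsub (Finset.mem_image_of_mem _ hy)
        have hsmul : ∀ k : ℕ, (k • (f a) : ZMod p) ∈ g s := by
          intro k
          induction k with
          | zero => simpa using hzero s
          | succ n ihn =>
            have h2 := hcl _ ihn
            rw [succ_nsmul, add_comm]
            exact h2
        have huniv : ∀ x : ZMod p, x ∈ g s := by
          intro x
          have hx : ((x * (f a)⁻¹).val • (f a) : ZMod p) = x := by
            rw [nsmul_eq_mul, ZMod.natCast_zmod_val, mul_assoc,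
              inv_mul_cancel₀ ha, mul_one]
          rw [← hx]; exact hsmul _
        have hcardp : (g s).card = p := by
          have : g s = Finset.univ := Finset.eq_univ_iff_forall.mpr huniv
          rw [this, Finset.card_univ, ZMod.card]
        have hmono : (g s).card ≤ (g (a ::ₘ s)).card := by
          apply Finset.card_le_card
          rw [hsplit]; exact Finset.subset_union_left
        rw [hcardp] at hmono
        exact le_trans (min_le_left _ _) hmono
      · -- strict growth
        obtain ⟨z, hz1, hz2⟩ := Finset.not_subset.mp hsub
        have hss : g s ⊂ g (a ::ₘ s) := by
          rw [hsplit]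
          refine ⟨Finset.subset_union_left, fun hcon => hz2 (hcon ?_)⟩
          exact Finset.mem_union_right _ hz1
        have := Finset.card_lt_card hss
        rw [Multiset.card_cons]
        omega
  have hfin := hgrow S hS
  have hminp : min p (Multiset.card S + 1) = p := by
    have := hp.pos; omega
  rw [hminp] at hfin
  have huniv : g S = Finset.univ := by
    have hle : (g S).card ≤ p := by
      have := Finset.card_le_univ (g S)
      rwa [ZMod.card] at this
    exact Finset.eq_univ_of_card _ (by rw [ZMod.card]; omega)
  have htmem : t ∈ g S := by rw [huniv]; exact Finset.mem_univ t
  obtain ⟨u, hu1, hu2⟩ := Finset.mem_image.mp htmem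
  have hule : u ≤ S := Multiset.mem_powerset.mp (Multiset.mem_toFinset.mp hu1)
  refine ⟨u, hule, ?_, hu2⟩
  intro h0
  rw [h0] at hu2
  simp at hu2
  exact ht hu2.symm

theorem local_powerful_size_bound : ∃ K' : ℝ, 0 < K' ∧ ∀ (p : ℕ), p.Prime →
    ∀ (a0 : ZMod (p ^ 2)) (A : Multiset (ZMod (p ^ 2))),
    (∀ a ∈ A, ¬∃ y : ZMod (p ^ 2), a = (p : ZMod (p ^ 2)) * y) →
    (∀ s : Multiset (ZMod (p ^ 2)), s ≤ A → s ≠ 0 →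
      ¬((∃ y : ZMod (p ^ 2), a0 + s.sum = (p : ZMod (p ^ 2)) * y) ∧ a0 + s.sum ≠ 0)) →
    (Multiset.card A : ℝ) ≤ K' * p := by
  classical
  refine ⟨7, by norm_num, ?_⟩
  intro p hp a0 A h1 h2
  have main : Multiset.card A ≤ 7 * p := by
    by_cases hp2 : p = 2
    · -- small case p = 2
      subst hp2
      by_contra hbig
      push_neg at hbig
      have helt : ∀ a ∈ A, a = 1 ∨ a = 3 := by
        intro a ha
        have hkey : ∀ b : ZMod (2^2), (¬∃ y, b = ((2:ℕ) : ZMod (2^2)) * y) → b = 1 ∨ b = 3 := by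
          decide
        exact hkey a (h1 a ha)
      have hcard2 : Multiset.card A ≤ Multiset.count 1 A + Multiset.count 3 A := by
        have hsub : A.toFinset ⊆ ({1, 3} : Finset (ZMod (2^2))) := by
          intro a ha
          rcases helt a (Multiset.mem_toFinset.mp ha) with h | h <;> simp [h]
        calc Multiset.card A = ∑ a ∈ A.toFinset, A.count a :=
              (Multiset.toFinset_sum_count_eq A).symm
          _ ≤ ∑ a ∈ ({1,3} : Finset (ZMod (2^2))), A.count a :=
              Finset.sum_le_sum_of_subset hsub
          _ = A.count 1 + A.count 3 := by
              rw [Finset.sum_insert (by decide), Finset.sum_singleton]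
      obtain ⟨x, hx, hcnt⟩ : ∃ x : ZMod (2^2), (x = 1 ∨ x = 3) ∧ 4 ≤ Multiset.count x A := by
        rcases (show 4 ≤ Multiset.count 1 A ∨ 4 ≤ Multiset.count 3 A by omega) with h | h
        exacts [⟨1, Or.inl rfl, h⟩, ⟨3, Or.inr rfl, h⟩]
      have hrep : Multiset.replicate 4 x ≤ A := Multiset.le_count_iff_replicate_le.mp hcnt
      have key : ∀ (b x : ZMod (2^2)), (x = 1 ∨ x = 3) →
          ∃ k : Fin 4, (∃ y, b + (k.val + 1) • x = ((2:ℕ) : ZMod (2^2)) * y) ∧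
            b + (k.val + 1) • x ≠ 0 := by decide
      obtain ⟨k, hk1, hk2⟩ := key a0 x hx
      have hs : Multiset.replicate (k.val + 1) x ≤ A :=
        le_trans ((Multiset.replicate_le_replicate x).mpr (by omega)) hrep
      have hne : Multiset.replicate (k.val + 1) x ≠ 0 := by
        intro hc
        have := congrArg Multiset.card hc
        simp at this
      have hsum : (Multiset.replicate (k.val + 1) x).sum = (k.val + 1) • x :=
        Multiset.sum_replicate _ _
      exact h2 _ hs hne (by rw [hsum]; exact ⟨hk1, hk2⟩)
    · -- main case p ≥ 3
      have hp3 : 3 ≤ p := by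
        have := hp.two_le
        rcases Nat.lt_or_ge p 3 with h | h
        · omega
        · omega
      haveI := Fact.mk hp
      haveI : NeZero (p^2) := ⟨pow_ne_zero 2 hp.ne_zero⟩
      by_contra hbig
      push_neg at hbig
      set f := ZMod.castHom (dvd_pow_self p two_ne_zero) (ZMod p) with hf
      have hA : ∀ a ∈ A, f a ≠ 0 := by
        intro a ha h0
        exact h1 a ha ((zmod_ker hp a).mp h0)
      have hcond : ∀ s : Multiset (ZMod (p^2)), s ≤ A → s ≠ 0 →
          f (a0 + s.sum) = 0 → a0 + s.sum = 0 := by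
        intro s hs hne h0
        by_contra hne0
        exact h2 s hs hne ⟨(zmod_ker hp _).mp h0, hne0⟩
      have hnz : ∀ k : ℕ, k ≠ 0 → k < p → ((k : ℕ) : ZMod p) ≠ 0 := by
        intro k h1k h2k hc
        have hd := (ZMod.natCast_eq_zero_iff k p).mp hc
        have := Nat.le_of_dvd (by omega) hd
        omega
      have haddne : ∀ (u w : Multiset (ZMod (p^2))), u ≠ 0 → u + w ≠ 0 := by
        intro u w hu hc
        have hcc := congrArg Multiset.card hc
        rw [Multiset.card_add] at hcc
        simp only [Multiset.card_zero] at hcc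
        exact hu (Multiset.card_eq_zero.mp (by omega))
      -- Step 1: find B ≤ A on which all zero-residue subsums vanish exactly
      obtain ⟨B, hBA, hBcard, hBzero⟩ :
          ∃ B : Multiset (ZMod (p^2)), B ≤ A ∧ 3 * (p-1) ≤ Multiset.card B ∧
            (∀ t, t ≤ B → t ≠ 0 → f t.sum = 0 → t.sum = 0) := by
        by_cases hfa0 : f a0 = 0
        · have hzblock : ∀ S : Multiset (ZMod (p^2)), S ≤ A → Multiset.card S = p →
              ∃ u, u ≤ S ∧ u ≠ 0 ∧ f u.sum = 0 := by
            intro S hSA hScard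
            have hSne : S ≠ 0 := by
              intro h0
              rw [h0, Multiset.card_zero] at hScard
              omega
            obtain ⟨e, he⟩ := Multiset.exists_mem_of_ne_zero hSne
            have herase : Multiset.card (S.erase e) = p - 1 := by
              rw [Multiset.card_erase_of_mem he, hScard]
              rfl
            have hfe : f e ≠ 0 := hA e (Multiset.mem_of_le hSA he)
            obtain ⟨u, hu1, hu2, hu3⟩ := subsums_univ hp f (S.erase e)
              (fun x hx => hA x (Multiset.mem_of_le (le_trans (Multiset.erase_le e S) hSA) hx))
              (le_of_eq herase.symm) (- f e) (neg_ne_zero.mpr hfe)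
            refine ⟨e ::ₘ u, ?_, ?_, ?_⟩
            · calc e ::ₘ u ≤ e ::ₘ S.erase e := Multiset.cons_le_cons e hu1
                _ = S := Multiset.cons_erase he
            · simp
            · rw [Multiset.sum_cons, _root_.map_add, hu3]; ring
          obtain ⟨A1, hA1le, hA1card⟩ := ms_exists_le_card A p (by omega)
          obtain ⟨A2, hA2le, hA2card⟩ := ms_exists_le_card (A - A1) p (by
            rw [Multiset.card_sub hA1le]; omega)
          obtain ⟨u1, hu1le, hu1ne, hu1sum⟩ := hzblock A1 hA1le hA1card
          obtain ⟨u2, hu2le, hu2ne, hu2sum⟩ :=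
            hzblock A2 (le_trans hA2le tsub_le_self) hA2card
          have hu1A : u1 ≤ A := le_trans hu1le hA1le
          have hu2A : u2 ≤ A := le_trans hu2le (le_trans hA2le tsub_le_self)
          have hu12 : u1 + u2 ≤ A := by
            have h := add_le_add (le_trans hu1le (le_refl A1)) (le_trans hu2le hA2le)
            rwa [add_tsub_cancel_of_le hA1le] at h
          have e1 : a0 + u1.sum = 0 :=
            hcond u1 hu1A hu1ne (by rw [_root_.map_add, hu1sum, hfa0, add_zero])
          have e2 : a0 + u2.sum = 0 :=
            hcond u2 hu2A hu2ne (by rw [_root_.map_add, hu2sum, hfa0, add_zero])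
          have e12 : a0 + (u1 + u2).sum = 0 :=
            hcond _ hu12 (haddne _ _ hu1ne)
              (by rw [Multiset.sum_add, _root_.map_add, _root_.map_add, hu1sum, hu2sum, hfa0]; ring)
          rw [Multiset.sum_add] at e12
          have ha0 : a0 = 0 := by linear_combination e1 + e2 - e12
          refine ⟨A, le_refl A, by omega, ?_⟩
          intro t ht hne h0
          have := hcond t ht hne (by rw [ha0, zero_add]; exact h0)
          rwa [ha0, zero_add] at this
        · obtain ⟨A1, hA1le, hA1card⟩ := ms_exists_le_card A (p-1) (by omega)
          obtain ⟨s1, hs1le, hs1ne, hs1sum⟩ := subsums_univ hp f A1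
            (fun x hx => hA x (Multiset.mem_of_le hA1le hx)) (le_of_eq hA1card.symm)
            (- f a0) (neg_ne_zero.mpr hfa0)
          have hs1A : s1 ≤ A := le_trans hs1le hA1le
          have e1 : a0 + s1.sum = 0 :=
            hcond s1 hs1A hs1ne (by rw [_root_.map_add, hs1sum]; ring)
          refine ⟨A - A1, tsub_le_self, by rw [Multiset.card_sub hA1le]; omega, ?_⟩
          intro t ht hne h0
          have hle : s1 + t ≤ A := by
            have h := add_le_add hs1le ht
            rwa [add_tsub_cancel_of_le hA1le] at h
          have hthis := hcond _ hle (haddne _ _ hs1ne)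
            (by rw [Multiset.sum_add, _root_.map_add, _root_.map_add, hs1sum, h0]; ring)
          rw [Multiset.sum_add] at hthis
          linear_combination hthis - e1
      -- Step 2: three disjoint blocks of size p - 1 inside B
      obtain ⟨B1, hB1le, hB1card⟩ := ms_exists_le_card B (p-1) (by omega)
      obtain ⟨B2, hB2le, hB2card⟩ := ms_exists_le_card (B - B1) (p-1) (by
        rw [Multiset.card_sub hB1le]; omega)
      obtain ⟨B3, hB3le, hB3card⟩ := ms_exists_le_card ((B - B1) - B2) (p-1) (by
        rw [Multiset.card_sub hB2le, Multiset.card_sub hB1le]; omega)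
      have h12 : B1 + B2 ≤ B := by
        have h := add_le_add_right hB2le B1
        rwa [add_tsub_cancel_of_le hB1le] at h
      have h123 : B1 + B2 + B3 ≤ B := by
        have h3 : B3 ≤ B - (B1 + B2) := by
          rw [← tsub_tsub]
          exact hB3le
        have h := add_le_add_right h3 (B1 + B2)
        rwa [add_tsub_cancel_of_le h12] at h
      have h13 : B1 + B3 ≤ B := by
        have h3 : B3 ≤ B - B1 := le_trans hB3le tsub_le_self
        have h := add_le_add_right h3 B1
        rwa [add_tsub_cancel_of_le hB1le] at h
      have hB1mem : ∀ x ∈ B1, f x ≠ 0 :=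
        fun x hx => hA x (Multiset.mem_of_le (le_trans hB1le hBA) hx)
      have hB2mem : ∀ x ∈ B2, f x ≠ 0 :=
        fun x hx => hA x (Multiset.mem_of_le (le_trans hB2le (le_trans tsub_le_self hBA)) hx)
      have hB3mem : ∀ x ∈ B3, f x ≠ 0 :=
        fun x hx => hA x (Multiset.mem_of_le
          (le_trans hB3le (le_trans tsub_le_self (le_trans tsub_le_self hBA))) hx)
      have hcov1 : ∀ t : ZMod p, t ≠ 0 → ∃ u, u ≤ B1 ∧ u ≠ 0 ∧ f u.sum = t :=
        fun t ht => subsums_univ hp f B1 hB1mem (le_of_eq hB1card.symm) t ht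
      have hcov2 : ∀ t : ZMod p, t ≠ 0 → ∃ u, u ≤ B2 ∧ u ≠ 0 ∧ f u.sum = t :=
        fun t ht => subsums_univ hp f B2 hB2mem (le_of_eq hB2card.symm) t ht
      have hcov3 : ∀ t : ZMod p, t ≠ 0 → ∃ u, u ≤ B3 ∧ u ≠ 0 ∧ f u.sum = t :=
        fun t ht => subsums_univ hp f B3 hB3mem (le_of_eq hB3card.symm) t ht
      choose v1 hv1le hv1ne hv1sum using hcov1
      choose v2 hv2le hv2ne hv2sum using hcov2
      choose v3 hv3le hv3ne hv3sum using hcov3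
      set P : ZMod p → ZMod (p^2) := fun r => if h : r ≠ 0 then (v1 r h).sum else 0 with hP
      have hPsum : ∀ (r : ZMod p) (h : r ≠ 0), f (P r) = r := by
        intro r h
        rw [hP]
        simp only [dif_pos h]
        exact hv1sum r h
      have hpair12 : ∀ (r : ZMod p) (h : r ≠ 0),
          (v1 r h).sum + (v2 (-r) (neg_ne_zero.mpr h)).sum = 0 := by
        intro r h
        have hle : v1 r h + v2 (-r) (neg_ne_zero.mpr h) ≤ B :=
          le_trans (add_le_add (hv1le r h) (hv2le _ _)) h12
        have hres := hBzero _ hle (haddne _ _ (hv1ne r h))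
          (by rw [Multiset.sum_add, _root_.map_add, hv1sum, hv2sum]; ring)
        rwa [Multiset.sum_add] at hres
      have hpair13 : ∀ (r : ZMod p) (h : r ≠ 0),
          (v1 r h).sum + (v3 (-r) (neg_ne_zero.mpr h)).sum = 0 := by
        intro r h
        have hle : v1 r h + v3 (-r) (neg_ne_zero.mpr h) ≤ B :=
          le_trans (add_le_add (hv1le r h) (hv3le _ _)) h13
        have hres := hBzero _ hle (haddne _ _ (hv1ne r h))
          (by rw [Multiset.sum_add, _root_.map_add, hv1sum, hv3sum]; ring)
        rwa [Multiset.sum_add] at hres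
      have htriple : ∀ (x y : ZMod p) (hx : x ≠ 0) (hy : y ≠ 0) (hxy : x + y ≠ 0),
          (v1 (x+y) hxy).sum + (v2 (-x) (neg_ne_zero.mpr hx)).sum
            + (v3 (-y) (neg_ne_zero.mpr hy)).sum = 0 := by
        intro x y hx hy hxy
        have hle : v1 (x+y) hxy + v2 (-x) (neg_ne_zero.mpr hx)
            + v3 (-y) (neg_ne_zero.mpr hy) ≤ B :=
          le_trans (add_le_add (add_le_add (hv1le _ _) (hv2le _ _)) (hv3le _ _)) h123
        have hres := hBzero _ hle (haddne _ _ (haddne _ _ (hv1ne _ _)))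
          (by rw [Multiset.sum_add, Multiset.sum_add, _root_.map_add, _root_.map_add,
                hv1sum, hv2sum, hv3sum]; ring)
        rwa [Multiset.sum_add, Multiset.sum_add] at hres
      have hPadd : ∀ (x y : ZMod p), x ≠ 0 → y ≠ 0 → x + y ≠ 0 → P (x+y) = P x + P y := by
        intro x y hx hy hxy
        rw [hP]
        simp only [dif_pos hx, dif_pos hy, dif_pos hxy]
        linear_combination htriple x y hx hy hxy - hpair12 x hx - hpair13 y hy
      have hone : (1 : ZMod p) ≠ 0 := one_ne_zero
      have hind : ∀ k : ℕ, 1 ≤ k → k ≤ p - 1 →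
          P ((k:ℕ) : ZMod p) = ((k:ℕ) : ZMod (p^2)) * P 1 := by
        intro k
        induction k with
        | zero => omega
        | succ n ih =>
          intro hk1 hk2
          by_cases hn : n = 0
          · subst hn
            norm_num
          · have hx : ((n:ℕ) : ZMod p) ≠ 0 := hnz n hn (by omega)
            have hcast : (((n+1:ℕ)) : ZMod p) = ((n:ℕ):ZMod p) + 1 := by push_cast; ring
            have hxy : ((n:ℕ):ZMod p) + 1 ≠ 0 := by
              rw [← hcast]
              exact hnz (n+1) (by omega) (by omega)
            rw [hcast, hPadd _ _ hx hone hxy, ih (by omega) (by omega)]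
            push_cast
            ring
      have hfp1 : f (P 1) = 1 := hPsum 1 hone
      have hx : ((p-1:ℕ) : ZMod p) ≠ 0 := hnz (p-1) (by omega) (by omega)
      have hy : ((2:ℕ) : ZMod p) ≠ 0 := hnz 2 (by omega) (by omega)
      have hsum1 : ((p-1:ℕ) : ZMod p) + ((2:ℕ) : ZMod p) = 1 := by
        rw [Nat.cast_sub (by omega : (1:ℕ) ≤ p), ZMod.natCast_self]
        push_cast
        ring
      have hxy : ((p-1:ℕ) : ZMod p) + ((2:ℕ):ZMod p) ≠ 0 := by
        rw [hsum1]; exact hone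
      have hkey := hPadd _ _ hx hy hxy
      rw [hsum1] at hkey
      rw [hind (p-1) (by omega) (le_refl _), hind 2 (by omega) (by omega)] at hkey
      have hpc : ((p:ℕ) : ZMod (p^2)) * P 1 = 0 := by
        have hcast2 : ((p-1:ℕ) : ZMod (p^2)) = ((p:ℕ) : ZMod (p^2)) - 1 := by
          rw [Nat.cast_sub (by omega : (1:ℕ) ≤ p)]
          push_cast
          ring
        rw [hcast2] at hkey
        push_cast at hkey ⊢
        linear_combination -hkey
      have hzero : f (P 1) = 0 := zmod_pmul hp (P 1) hpc
      rw [hfp1] at hzero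
      exact one_ne_zero hzero
  calc (Multiset.card A : ℝ) ≤ ((7 * p : ℕ) : ℝ) := by exact_mod_cast main
    _ = 7 * p := by push_cast; ring
end

section
/- If A ⊆ {1,…,N} is a multiset and there exists a nonnegative integer a_0 such that every element of a_0 + Σ*(A) is squarefree, then |A| ≤ 72 (log N)², provided Σ_{p ≤ 6 log N} log p > 2 log N (which holds for all sufficiently large N). -/
open Finset

def subSumsMod (m : ℕ) (t : Multiset ℕ) : Finset (ZMod m) :=
  (t.powerset.map (fun u => ((u.sum : ℕ) : ZMod m))).toFinset

lemma zero_mem_subSumsMod (m : ℕ) (t : Multiset ℕ) : (0 : ZMod m) ∈ subSumsMod m t := by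
  simp only [subSumsMod, Multiset.mem_toFinset, Multiset.mem_map]
  exact ⟨0, by simp [Multiset.mem_powerset]⟩

lemma mem_subSumsMod {m : ℕ} {t : Multiset ℕ} {x : ZMod m} :
    x ∈ subSumsMod m t ↔ ∃ u : Multiset ℕ, u ≤ t ∧ ((u.sum : ℕ) : ZMod m) = x := by
  simp [subSumsMod, Multiset.mem_toFinset, Multiset.mem_map, Multiset.mem_powerset]

lemma subSumsMod_cons (m : ℕ) (a : ℕ) (t : Multiset ℕ) :
    subSumsMod m (a ::ₘ t) =
      subSumsMod m t ∪ (subSumsMod m t).image (fun x => (a : ZMod m) + x) := by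
  unfold subSumsMod
  rw [Multiset.powerset_cons, Multiset.map_add, Multiset.toFinset_add, Multiset.map_map]
  congr 1
  have h : ((fun u : Multiset ℕ => ((u.sum : ℕ) : ZMod m)) ∘ Multiset.cons a)
      = (fun x : ZMod m => (a : ZMod m) + x) ∘ (fun u : Multiset ℕ => ((u.sum : ℕ) : ZMod m)) := by
    funext u
    simp [Multiset.sum_cons]
  rw [h, ← Multiset.map_map, Multiset.toFinset_map]

lemma card_subSumsMod (m : ℕ) [NeZero m] (t : Multiset ℕ)
    (ht : ∀ x ∈ t, IsUnit ((x : ZMod m))) :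
    min m (Multiset.card t + 1) ≤ (subSumsMod m t).card := by
  induction t using Multiset.induction with
  | empty =>
      have : (subSumsMod m 0).card = 1 := by
        simp [subSumsMod, Multiset.powerset_zero]
      simp only [Multiset.card_zero, zero_add, this]
      exact min_le_right _ _
  | cons a s ih =>
      have hu : IsUnit ((a : ZMod m)) := ht a (Multiset.mem_cons_self a s)
      have ihs := ih (fun x hx => ht x (Multiset.mem_cons_of_mem hx))
      rw [subSumsMod_cons]
      set S := subSumsMod m s with hS
      by_cases h : S.image (fun x => (a : ZMod m) + x) = S
      · -- then S = univ
        have hsmul : ∀ n : ℕ, (n • (a : ZMod m)) ∈ S := by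
          intro n
          induction n with
          | zero => simpa using zero_mem_subSumsMod m s
          | succ k ihk =>
              have : (a : ZMod m) + k • (a : ZMod m) ∈ S.image (fun x => (a : ZMod m) + x) :=
                Finset.mem_image_of_mem _ ihk
              rw [h] at this
              rw [succ_nsmul']
              exact this
        have huniv : S = Finset.univ := by
          apply Finset.eq_univ_of_forall
          intro x
          have : ((x * ↑hu.unit⁻¹ : ZMod m).val) • (a : ZMod m) = x := by
            rw [nsmul_eq_mul, ZMod.natCast_val, ZMod.cast_id]
            calc (x * ↑hu.unit⁻¹) * (a : ZMod m)
                = x * (↑hu.unit⁻¹ * ↑hu.unit) := by rw [hu.unit_spec]; ring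
              _ = x := by rw [Units.inv_mul]; ring
          rw [← this]
          exact hsmul _
        calc min m (Multiset.card (a ::ₘ s) + 1) ≤ m := min_le_left _ _
          _ = S.card := by rw [huniv, Finset.card_univ, ZMod.card]
          _ ≤ (S ∪ S.image fun x => (a : ZMod m) + x).card :=
              Finset.card_le_card Finset.subset_union_left
      · -- card grows
        have hinj : Set.InjOn (fun x => (a : ZMod m) + x) S := fun x _ y _ hxy => by
          simpa using hxy
        have hcardim : (S.image (fun x => (a : ZMod m) + x)).card = S.card :=
          Finset.card_image_of_injOn hinj
        have hne : ¬ (S.image (fun x => (a : ZMod m) + x)) ⊆ S := by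
          intro hsub
          exact h (Finset.eq_of_subset_of_card_le hsub (le_of_eq hcardim.symm))
        obtain ⟨y, hy, hyS⟩ := Finset.not_subset.mp hne
        have hsub : insert y S ⊆ S ∪ S.image (fun x => (a : ZMod m) + x) := by
          intro z hz
          rcases Finset.mem_insert.mp hz with rfl | hz
          · exact Finset.mem_union_right _ hy
          · exact Finset.mem_union_left _ hz
        have hcard : S.card + 1 ≤ (S ∪ S.image fun x => (a : ZMod m) + x).card := by
          calc S.card + 1 = (insert y S).card := (Finset.card_insert_of_notMem hyS).symm
            _ ≤ _ := Finset.card_le_card hsub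
        rw [Multiset.card_cons]
        omega

lemma filter_not_dvd_lt (p : ℕ) (hp : p.Prime) (a0 : ℕ) (A : Multiset ℕ)
    (hsf : ∀ s : Multiset ℕ, s ≤ A → s ≠ 0 → Squarefree (a0 + s.sum)) :
    Multiset.card (A.filter (fun a => ¬ p ∣ a)) < p ^ 2 := by
  classical
  by_contra hcon
  push_neg at hcon
  haveI : NeZero (p ^ 2) := ⟨pow_ne_zero 2 hp.ne_zero⟩
  set t := A.filter (fun a => ¬ p ∣ a) with hts
  have htA : t ≤ A := Multiset.filter_le _ _
  have hunits : ∀ x ∈ t, IsUnit ((x : ZMod (p ^ 2))) := by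
    intro x hx
    have hnd : ¬ p ∣ x := (Multiset.mem_filter.mp hx).2
    rw [ZMod.isUnit_iff_coprime]
    exact (((hp.coprime_iff_not_dvd).mpr hnd).symm).pow_right 2
  have htpos : t ≠ 0 := by
    intro h0
    rw [h0] at hcon
    simp at hcon
    have := hp.two_le
    nlinarith [hp.two_le]
  obtain ⟨a, ha⟩ := Multiset.exists_mem_of_ne_zero htpos
  set s := t.erase a with hse
  have hcards : p ^ 2 - 1 ≤ Multiset.card s := by
    rw [hse, Multiset.card_erase_of_mem ha, Nat.pred_eq_sub_one]
    omega
  have h1 := card_subSumsMod (p ^ 2) s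
    (fun x hx => hunits x (Multiset.mem_of_le (Multiset.erase_le a t) hx))
  have h2 : (p ^ 2) ≤ (subSumsMod (p ^ 2) s).card := by
    have : min (p ^ 2) (Multiset.card s + 1) = p ^ 2 := by omega
    omega
  have huniv : subSumsMod (p ^ 2) s = Finset.univ := by
    apply Finset.eq_univ_of_card
    have hle : (subSumsMod (p ^ 2) s).card ≤ Fintype.card (ZMod (p ^ 2)) :=
      Finset.card_le_univ _
    rw [ZMod.card] at hle ⊢
    omega
  have hmem : (-(a0 : ZMod (p ^ 2)) - (a : ZMod (p ^ 2))) ∈ subSumsMod (p ^ 2) s := by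
    rw [huniv]; exact Finset.mem_univ _
  obtain ⟨u, hu, hsum⟩ := mem_subSumsMod.mp hmem
  have hs'A : (a ::ₘ u) ≤ A := by
    refine le_trans ?_ htA
    calc (a ::ₘ u) ≤ a ::ₘ s := Multiset.cons_le_cons a hu
      _ = t := by rw [hse, Multiset.cons_erase ha]
  have hsq := hsf (a ::ₘ u) hs'A (Multiset.cons_ne_zero)
  have hdvd : (p ^ 2 : ℕ) ∣ a0 + (a ::ₘ u).sum := by
    rw [← ZMod.natCast_eq_zero_iff, Multiset.sum_cons, Nat.cast_add, Nat.cast_add,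
      hsum]
    ring
  rw [pow_two] at hdvd
  exact hp.not_isUnit (hsq p hdvd)

lemma sum_log_primes_dvd_le (N : ℕ) (P : Finset ℕ) (hP : ∀ p ∈ P, p.Prime)
    {a : ℕ} (ha : a ∈ Finset.Icc 1 N) :
    ∑ p ∈ P.filter (fun p => p ∣ a), Real.log p ≤ Real.log N := by
  classical
  obtain ⟨ha1, haN⟩ := Finset.mem_Icc.mp ha
  set Q := P.filter (fun p => p ∣ a) with hQ
  have hQP : ∀ q ∈ Q, q.Prime := fun q hq => hP q (Finset.mem_of_mem_filter _ hq)
  have hprod : (∏ p ∈ Q, p) ∣ a :=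
    Finset.prod_primes_dvd a (fun q hq => (hQP q hq).prime)
      (fun q hq => (Finset.mem_filter.mp hq).2)
  have hle : (∏ p ∈ Q, p) ≤ N := le_trans (Nat.le_of_dvd (by omega) hprod) haN
  have hlog : ∑ p ∈ Q, Real.log p = Real.log ((∏ p ∈ Q, p : ℕ) : ℝ) := by
    rw [Nat.cast_prod]
    exact (Real.log_prod (fun p hp => by
      exact_mod_cast (hQP p hp).ne_zero)).symm
  rw [hlog]
  apply Real.log_le_log
  · exact_mod_cast Nat.pos_of_ne_zero (fun h0 => by
      have := Finset.prod_eq_zero_iff.mp h0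
      obtain ⟨q, hq, hq0⟩ := this
      exact (hQP q hq).ne_zero hq0)
  · exact_mod_cast hle

lemma counting_lemma (N : ℕ) (P : Finset ℕ) (hP : ∀ p ∈ P, p.Prime) :
    ∀ (A : Multiset ℕ), (∀ a ∈ A, a ∈ Finset.Icc 1 N) →
    ∑ p ∈ P, Real.log p * (Multiset.card (A.filter (fun a => p ∣ a)) : ℝ)
      ≤ (Multiset.card A : ℝ) * Real.log N := by
  classical
  intro A
  induction A using Multiset.induction with
  | empty => simp
  | cons a s ih =>
      intro hmem
      have ha := hmem a (Multiset.mem_cons_self a s)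
      have hs := ih (fun x hx => hmem x (Multiset.mem_cons_of_mem hx))
      have hstep : ∀ p ∈ P,
          Real.log p * (Multiset.card ((a ::ₘ s).filter (fun x => p ∣ x)) : ℝ)
            = (if p ∣ a then Real.log p else 0)
              + Real.log p * (Multiset.card (s.filter (fun x => p ∣ x)) : ℝ) := by
        intro p _
        rw [Multiset.filter_cons]
        by_cases hpa : p ∣ a
        · simp [hpa, Multiset.card_add]
          ring
        · simp [hpa]
      rw [Finset.sum_congr rfl hstep, Finset.sum_add_distrib]
      have hkey : ∑ p ∈ P, (if p ∣ a then Real.log p else 0) ≤ Real.log N := by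
        rw [← Finset.sum_filter]
        exact sum_log_primes_dvd_le N P hP ha
      have : (Multiset.card (a ::ₘ s) : ℝ) = (Multiset.card s : ℝ) + 1 := by
        rw [Multiset.card_cons]; push_cast; ring
      rw [this]
      nlinarith [hkey, hs]



open scoped Classical in
theorem hilbert_cube_in_squarefree (N : ℕ) (hN : 2 ≤ N) (A : Multiset ℕ)
    (hA : ∀ a ∈ A, a ∈ Finset.Icc 1 N) (a0 : ℕ)
    (hsf : ∀ s : Multiset ℕ, s ≤ A → s ≠ 0 → Squarefree (a0 + s.sum))
    (hprimes : 2 * Real.log N <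
      ∑ p ∈ (Finset.range (6 * N + 1)).filter
        (fun p : ℕ => Nat.Prime p ∧ (p : ℝ) ≤ 6 * Real.log N), Real.log p) :
    (Multiset.card A : ℝ) ≤ 72 * (Real.log N) ^ 2 := by
  classical
  set L := Real.log N with hLdef
  set P := (Finset.range (6 * N + 1)).filter
      (fun p : ℕ => Nat.Prime p ∧ (p : ℝ) ≤ 6 * Real.log N) with hPdef
  have hP : ∀ p ∈ P, p.Prime := fun p hp => ((Finset.mem_filter.mp hp).2).1
  have hPle : ∀ p ∈ P, (p : ℝ) ≤ 6 * L := fun p hp => ((Finset.mem_filter.mp hp).2).2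
  set T := ∑ p ∈ P, Real.log p with hTdef
  have hTL : 2 * L < T := hprimes
  have hL0 : 0 < L := Real.log_pos (by exact_mod_cast lt_of_lt_of_le one_lt_two hN)
  have hT0 : 0 < T := lt_trans (by positivity) hTL
  have hcnt : ∀ p ∈ P, (Multiset.card (A.filter (fun a => ¬ p ∣ a)) : ℝ) ≤ 36 * L ^ 2 := by
    intro p hp
    have h1 := filter_not_dvd_lt p (hP p hp) a0 A hsf
    have h2 : (Multiset.card (A.filter (fun a => ¬ p ∣ a)) : ℝ) < ((p : ℝ)) ^ 2 := by
      exact_mod_cast h1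
    have hp0 : (0 : ℝ) ≤ (p : ℝ) := Nat.cast_nonneg p
    nlinarith [hPle p hp]
  have hsplit : ∀ p : ℕ, Multiset.card (A.filter (fun a => p ∣ a))
      + Multiset.card (A.filter (fun a => ¬ p ∣ a)) = Multiset.card A := by
    intro p
    rw [← Multiset.card_add, Multiset.filter_add_not]
  have hcount := counting_lemma N P hP A hA
  have hmain : (Multiset.card A : ℝ) * T ≤ 36 * L ^ 2 * T + (Multiset.card A : ℝ) * L := by
    have e1 : (Multiset.card A : ℝ) * T
        = ∑ p ∈ P, Real.log p * (Multiset.card A : ℝ) := by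
      rw [hTdef, Finset.mul_sum]
      exact Finset.sum_congr rfl (fun p _ => by ring)
    have e2 : ∀ p ∈ P, Real.log p * (Multiset.card A : ℝ)
        = Real.log p * (Multiset.card (A.filter (fun a => ¬ p ∣ a)) : ℝ)
          + Real.log p * (Multiset.card (A.filter (fun a => p ∣ a)) : ℝ) := by
      intro p _
      have := hsplit p
      have hc : (Multiset.card A : ℝ) = (Multiset.card (A.filter (fun a => p ∣ a)) : ℝ)
          + (Multiset.card (A.filter (fun a => ¬ p ∣ a)) : ℝ) := by
        exact_mod_cast (this.symm)
      rw [hc]; ring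
    rw [e1, Finset.sum_congr rfl e2, Finset.sum_add_distrib]
    have h3 : ∑ p ∈ P, Real.log p * (Multiset.card (A.filter (fun a => ¬ p ∣ a)) : ℝ)
        ≤ 36 * L ^ 2 * T := by
      calc ∑ p ∈ P, Real.log p * (Multiset.card (A.filter (fun a => ¬ p ∣ a)) : ℝ)
          ≤ ∑ p ∈ P, Real.log p * (36 * L ^ 2) :=
            Finset.sum_le_sum (fun p hp =>
              mul_le_mul_of_nonneg_left (hcnt p hp) (Real.log_natCast_nonneg p))
        _ = 36 * L ^ 2 * T := by
              rw [hTdef, Finset.mul_sum]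
              exact Finset.sum_congr rfl (fun p _ => by ring)
    exact add_le_add h3 hcount
  have hA0 : (0 : ℝ) ≤ (Multiset.card A : ℝ) := Nat.cast_nonneg _
  nlinarith [hmain, hTL, hL0, hT0, hA0, mul_pos hL0 hL0, sq_nonneg L,
    mul_nonneg hA0 (le_of_lt hL0)]
end

section
/- Let ε > 0, let A ⊆ {1,…,N} be a finite multiset of positive integers, and let B be a set of pairwise coprime prime powers such that for each b ∈ B, the sums in Σ*(A) do not run over all residue classes modulo b. If Σ_{b∈B} Λ(b) > (1+ε)·log N, then |A| ≤ (1 + ε⁻¹)·max_{b∈B} b. -/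
open Classical in
noncomputable def vuS (n : ℕ) [NeZero n] (A : Multiset ℕ) : Finset (ZMod n) :=
  Finset.univ.filter (fun r => ∃ s ≤ A, s ≠ 0 ∧ ((s.sum : ZMod n) = r))

lemma mem_vuS {n : ℕ} [NeZero n] {A : Multiset ℕ} {r : ZMod n} :
    r ∈ vuS n A ↔ ∃ s ≤ A, s ≠ 0 ∧ ((s.sum : ZMod n) = r) := by
  simp [vuS]

lemma gen_closure {n : ℕ} [NeZero n] (u : ZMod n) (hu : IsUnit u)
    (S : Finset (ZMod n)) (h1 : u ∈ S) (h2 : ∀ x ∈ S, x + u ∈ S) : S = Finset.univ := by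
  have key : ∀ k : ℕ, (k + 1) • u ∈ S := by
    intro k
    induction k with
    | zero => simpa using h1
    | succ k ih => rw [succ_nsmul]; exact h2 _ ih
  apply Finset.eq_univ_of_forall
  intro x
  obtain ⟨v, hv⟩ := hu.exists_right_inv
  have hx : x = (x * v).val • u := by
    rw [nsmul_eq_mul, ZMod.natCast_val, ZMod.cast_id, mul_assoc, mul_comm v u, hv, mul_one]
  rcases Nat.eq_zero_or_pos (x * v).val with h0 | hp
  · have hx0 : x = 0 := by rw [hx, h0, zero_smul]
    have hn : ((n - 1) + 1) • u = x := by
      rw [Nat.sub_add_cancel (Nat.one_le_iff_ne_zero.mpr (NeZero.ne n)), hx0,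
        nsmul_eq_mul, ZMod.natCast_self, zero_mul]
    exact hn ▸ key (n - 1)
  · obtain ⟨k, hk⟩ := Nat.exists_eq_add_of_le hp
    rw [hx, hk, Nat.add_comm 1 k]
    exact key k

lemma vu_main {n : ℕ} [NeZero n] (A : Multiset ℕ) (h : ∀ a ∈ A, IsUnit ((a : ZMod n))) :
    vuS n A = Finset.univ ∨ Multiset.card A ≤ (vuS n A).card := by
  induction A using Multiset.induction_on with
  | empty => right; simp
  | cons a A ih =>
    have hA : ∀ x ∈ A, IsUnit ((x : ZMod n)) := fun x hx => h x (Multiset.mem_cons_of_mem hx)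
    have hsub : vuS n A ⊆ vuS n (a ::ₘ A) := by
      intro r hr
      rw [mem_vuS] at hr ⊢
      obtain ⟨s, hs, h0, hsum⟩ := hr
      exact ⟨s, hs.trans (Multiset.le_cons_self A a), h0, hsum⟩
    have ha : ((a : ZMod n)) ∈ vuS n (a ::ₘ A) := by
      rw [mem_vuS]
      exact ⟨{a}, Multiset.singleton_le.mpr (Multiset.mem_cons_self a A), by simp, by simp⟩
    have hadd : ∀ r ∈ vuS n A, r + (a : ZMod n) ∈ vuS n (a ::ₘ A) := by
      intro r hr
      rw [mem_vuS] at hr ⊢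
      obtain ⟨s, hs, h0, hsum⟩ := hr
      refine ⟨a ::ₘ s, Multiset.cons_le_cons a hs, by simp, ?_⟩
      rw [Multiset.sum_cons, ← hsum]
      push_cast
      ring
    rcases ih hA with heq | hcard
    · left
      exact Finset.univ_subset_iff.mp (heq ▸ hsub)
    · by_cases hstab : (a : ZMod n) ∈ vuS n A ∧ ∀ r ∈ vuS n A, r + (a : ZMod n) ∈ vuS n A
      · left
        have huniv := gen_closure (a : ZMod n) (h a (Multiset.mem_cons_self a A))
          (vuS n A) hstab.1 hstab.2
        exact Finset.univ_subset_iff.mp (huniv ▸ hsub)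
      · right
        have hssub : vuS n A ⊂ vuS n (a ::ₘ A) := by
          rw [Finset.ssubset_iff_of_subset hsub]
          push_neg at hstab
          by_cases hin : (a : ZMod n) ∈ vuS n A
          · obtain ⟨r, hr, hr2⟩ := hstab hin
            exact ⟨r + a, hadd r hr, hr2⟩
          · exact ⟨a, ha, hin⟩
        have := Finset.card_lt_card hssub
        rw [Multiset.card_cons]
        omega

lemma vu_full {n : ℕ} [NeZero n] (A : Multiset ℕ) (h : ∀ a ∈ A, IsUnit ((a : ZMod n)))
    (hcard : n ≤ Multiset.card A) : vuS n A = Finset.univ := by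
  rcases vu_main A h with heq | hc
  · exact heq
  · apply Finset.eq_univ_of_card
    have h1 : (vuS n A).card ≤ Fintype.card (ZMod n) := Finset.card_le_univ _
    rw [ZMod.card] at h1 ⊢
    omega

lemma per_elt_bound (B : Finset ℕ) (hBpp : ∀ b ∈ B, IsPrimePow b)
    (hcop : (B : Set ℕ).Pairwise Nat.Coprime) (N a : ℕ) (ha1 : 1 ≤ a) (haN : a ≤ N) :
    ∑ b ∈ B.filter (fun b => ¬ Nat.Coprime a b), ArithmeticFunction.vonMangoldt b
      ≤ Real.log N := by
  set B' := B.filter (fun b => ¬ Nat.Coprime a b) with hB'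
  have hsub : B' ⊆ B := Finset.filter_subset _ _
  have hminFac : ∀ b ∈ B', (b.minFac).Prime ∧ b.minFac ∣ a := by
    intro b hb
    obtain ⟨p, k, hp, hk, hpk⟩ := hBpp b (hsub hb)
    have hpp : p.Prime := hp.nat_prime
    have hmf : b.minFac = p := by rw [← hpk]; exact hpp.pow_minFac hk.ne'
    refine ⟨hmf ▸ hpp, ?_⟩
    rw [hmf]
    by_contra hpd
    have hcop2 : Nat.Coprime a b := by
      rw [← hpk]
      exact Nat.Coprime.pow_right _ ((hpp.coprime_iff_not_dvd.mpr hpd).symm)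
    exact (Finset.mem_filter.mp hb).2 hcop2
  have hinj : Set.InjOn Nat.minFac B' := by
    intro b hb c hc hbc
    by_contra hne
    have hco : Nat.Coprime b c := hcop (hsub hb) (hsub hc) hne
    have h1 := (hminFac b hb).1
    have hdvd1 : b.minFac ∣ b := Nat.minFac_dvd b
    have hdvd2 : b.minFac ∣ c := hbc ▸ Nat.minFac_dvd c
    have := Nat.Coprime.eq_one_of_dvd (hco.coprime_dvd_left hdvd1) hdvd2
    exact h1.one_lt.ne' this
  have hΛeq : ∀ b ∈ B', ArithmeticFunction.vonMangoldt b = Real.log (b.minFac) := by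
    intro b hb
    rw [ArithmeticFunction.vonMangoldt_apply, if_pos (hBpp b (hsub hb))]
  have hprod_dvd : (∏ p ∈ B'.image Nat.minFac, p) ∣ a := by
    apply Finset.prod_primes_dvd
    · intro p hp
      obtain ⟨b, hb, rfl⟩ := Finset.mem_image.mp hp
      exact (hminFac b hb).1.prime
    · intro p hp
      obtain ⟨b, hb, rfl⟩ := Finset.mem_image.mp hp
      exact (hminFac b hb).2
  have hprod_le : (∏ p ∈ B'.image Nat.minFac, p) ≤ N :=
    le_trans (Nat.le_of_dvd ha1 hprod_dvd) haN
  have hprod_pos : 0 < (∏ p ∈ B'.image Nat.minFac, p) :=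
    Finset.prod_pos (fun p hp => by
      obtain ⟨b, hb, rfl⟩ := Finset.mem_image.mp hp
      exact (hminFac b hb).1.pos)
  calc ∑ b ∈ B', ArithmeticFunction.vonMangoldt b
      = ∑ b ∈ B', Real.log (b.minFac) := Finset.sum_congr rfl hΛeq
    _ = ∑ p ∈ B'.image Nat.minFac, Real.log p := by
        rw [Finset.sum_image (fun b hb c hc h => hinj hb hc h)]
    _ = Real.log (∏ p ∈ B'.image Nat.minFac, (p : ℝ)) := by
        rw [Real.log_prod]
        intro p hp
        obtain ⟨b, hb, rfl⟩ := Finset.mem_image.mp hp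
        exact_mod_cast (hminFac b hb).1.pos.ne'
    _ ≤ Real.log N := by
        rw [← Nat.cast_prod]
        apply Real.log_le_log
        · exact_mod_cast hprod_pos
        · exact_mod_cast hprod_le

lemma double_count (B : Finset ℕ) (L : ℝ) :
    ∀ (A : Multiset ℕ),
      (∀ a ∈ A, ∑ b ∈ B.filter (fun b => ¬ Nat.Coprime a b),
          ArithmeticFunction.vonMangoldt b ≤ L) →
      ∑ b ∈ B, ArithmeticFunction.vonMangoldt b
          * ((A.filter (fun a => ¬ Nat.Coprime a b)).card : ℝ)
        ≤ (Multiset.card A : ℝ) * L := by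
  intro A
  induction A using Multiset.induction_on with
  | empty => intro _; simp
  | cons a A ih =>
    intro h
    have ha := h a (Multiset.mem_cons_self a A)
    have hA := ih (fun x hx => h x (Multiset.mem_cons_of_mem hx))
    have hsplit : ∀ b : ℕ, ((Multiset.filter (fun x => ¬ Nat.Coprime x b) (a ::ₘ A)).card : ℝ)
        = ((Multiset.filter (fun x => ¬ Nat.Coprime x b) A).card : ℝ)
          + if ¬ Nat.Coprime a b then 1 else 0 := by
      intro b
      rw [Multiset.filter_cons]
      split <;> simp [add_comm]
    calc ∑ b ∈ B, ArithmeticFunction.vonMangoldt b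
            * ((Multiset.filter (fun x => ¬ Nat.Coprime x b) (a ::ₘ A)).card : ℝ)
        = ∑ b ∈ B, (ArithmeticFunction.vonMangoldt b
              * ((Multiset.filter (fun x => ¬ Nat.Coprime x b) A).card : ℝ)
            + (if ¬ Nat.Coprime a b then ArithmeticFunction.vonMangoldt b else 0)) := by
          refine Finset.sum_congr rfl fun b _ => ?_
          rw [hsplit b]
          split <;> ring
      _ = (∑ b ∈ B, ArithmeticFunction.vonMangoldt b
              * ((Multiset.filter (fun x => ¬ Nat.Coprime x b) A).card : ℝ))
            + ∑ b ∈ B.filter (fun b => ¬ Nat.Coprime a b),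
                ArithmeticFunction.vonMangoldt b := by
          rw [Finset.sum_add_distrib, Finset.sum_filter]
      _ ≤ (Multiset.card A : ℝ) * L + L := add_le_add hA ha
      _ = (Multiset.card (a ::ₘ A) : ℝ) * L := by
          rw [Multiset.card_cons]; push_cast; ring

theorem multiset_incomplete_sums_bound (ε : ℝ) (hε : 0 < ε) (N : ℕ) (A : Multiset ℕ)
    (hA : ∀ a ∈ A, a ∈ Finset.Icc 1 N)
    (B : Finset ℕ) (hBpp : ∀ b ∈ B, IsPrimePow b)
    (hcop : (B : Set ℕ).Pairwise Nat.Coprime)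
    (hmiss : ∀ b ∈ B, ∃ r : ℕ, ∀ s : Multiset ℕ, s ≤ A → s ≠ 0 → s.sum % b ≠ r % b)
    (hΛ : (1 + ε) * Real.log N < ∑ b ∈ B, ArithmeticFunction.vonMangoldt b) :
    (Multiset.card A : ℝ) ≤ (1 + ε⁻¹) * ((B.sup id : ℕ) : ℝ) := by
  set m : ℕ := B.sup id with hm
  set x : ℝ := (Multiset.card A : ℝ) with hx
  have hx0 : 0 ≤ x := Nat.cast_nonneg _
  have hm0 : (0:ℝ) ≤ (m:ℝ) := Nat.cast_nonneg _
  have hmb : ∀ b ∈ B, (b:ℝ) ≤ (m:ℝ) := fun b hb => Nat.cast_le.mpr (Finset.le_sup (f := id) hb)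
  have hlogN : (0:ℝ) ≤ Real.log N := Real.log_natCast_nonneg N
  have hΛ0 : ∀ b ∈ B, 0 ≤ ArithmeticFunction.vonMangoldt b :=
    fun b _ => ArithmeticFunction.vonMangoldt_nonneg
  have hcnt : ∀ b ∈ B, x - (m:ℝ) ≤ ((A.filter (fun a => ¬ Nat.Coprime a b)).card : ℝ) := by
    intro b hb
    haveI : NeZero b := ⟨((hBpp b hb).one_lt).ne_bot⟩
    have hAb : Multiset.card (A.filter (fun a => Nat.Coprime a b)) < b := by
      by_contra hge
      push_neg at hge
      obtain ⟨r, hr⟩ := hmiss b hb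
      have hunits : ∀ a ∈ A.filter (fun a => Nat.Coprime a b), IsUnit ((a : ZMod b)) := by
        intro a ha
        exact (ZMod.isUnit_iff_coprime a b).mpr (Multiset.mem_filter.mp ha).2
      have hfull := vu_full (A.filter (fun a => Nat.Coprime a b)) hunits hge
      have hrmem : (r : ZMod b) ∈ vuS b (A.filter (fun a => Nat.Coprime a b)) := by
        rw [hfull]; exact Finset.mem_univ _
      obtain ⟨s, hsle, hs0, hsum⟩ := mem_vuS.mp hrmem
      refine hr s (hsle.trans (Multiset.filter_le _ _)) hs0 ?_
      exact (ZMod.natCast_eq_natCast_iff _ _ _).mp hsum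
    have hsplit : Multiset.card (A.filter (fun a => Nat.Coprime a b))
        + Multiset.card (A.filter (fun a => ¬ Nat.Coprime a b)) = Multiset.card A := by
      rw [← Multiset.card_add, Multiset.filter_add_not]
    have hbm := hmb b hb
    have h1 : (Multiset.card (A.filter (fun a => Nat.Coprime a b)) : ℝ) < (b:ℝ) := by
      exact_mod_cast hAb
    have h2 : (Multiset.card (A.filter (fun a => Nat.Coprime a b)) : ℝ)
        + (Multiset.card (A.filter (fun a => ¬ Nat.Coprime a b)) : ℝ) = x := by
      rw [hx]
      exact_mod_cast hsplit
    linarith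
  have hlow : (x - (m:ℝ)) * (∑ b ∈ B, ArithmeticFunction.vonMangoldt b)
      ≤ ∑ b ∈ B, ArithmeticFunction.vonMangoldt b
          * ((A.filter (fun a => ¬ Nat.Coprime a b)).card : ℝ) := by
    rw [Finset.mul_sum]
    refine Finset.sum_le_sum fun b hb => ?_
    rw [mul_comm (x - (m:ℝ))]
    exact mul_le_mul_of_nonneg_left (hcnt b hb) (hΛ0 b hb)
  have hup : ∑ b ∈ B, ArithmeticFunction.vonMangoldt b
          * ((A.filter (fun a => ¬ Nat.Coprime a b)).card : ℝ)
      ≤ x * Real.log N := by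
    rw [hx]
    exact double_count B (Real.log N) A (fun a ha => by
      have h := Finset.mem_Icc.mp (hA a ha)
      exact per_elt_bound B hBpp hcop N a h.1 h.2)
  have hkey : (x - (m:ℝ)) * (∑ b ∈ B, ArithmeticFunction.vonMangoldt b) ≤ x * Real.log N :=
    hlow.trans hup
  by_cases hxm : x ≤ (m:ℝ)
  · have h1 : (1:ℝ) ≤ 1 + ε⁻¹ := by
      have : 0 < ε⁻¹ := inv_pos.mpr hε
      linarith
    nlinarith
  · push_neg at hxm
    rcases eq_or_lt_of_le hlogN with hL0 | hLpos
    · exfalso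
      have hSpos : 0 < ∑ b ∈ B, ArithmeticFunction.vonMangoldt b := by
        rw [← hL0] at hΛ
        linarith [hΛ]
      nlinarith [hkey]
    · have h1 : (x - (m:ℝ)) * (1 + ε) ≤ x := by
        have h2 : (x - (m:ℝ)) * ((1 + ε) * Real.log N)
            ≤ (x - (m:ℝ)) * (∑ b ∈ B, ArithmeticFunction.vonMangoldt b) :=
          mul_le_mul_of_nonneg_left hΛ.le (by linarith)
        have h3 := h2.trans hkey
        nlinarith [hLpos]
      have hεinv : ε * ε⁻¹ = 1 := mul_inv_cancel₀ hε.ne'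
      nlinarith [h1, hε, hm0]
end

section
/- Let n be a positive integer and let A be a finite multiset of elements of ℤ/nℤ each of which is a unit (coprime to n). If |A| ≥ n (counting multiplicity), then Σ*(A) = ℤ/nℤ, i.e., every residue class modulo n is a nonempty sub-multiset sum of A. -/
set_option linter.unnecessarySimpa false
open Finset

private def ssums (n : ℕ) : List (ZMod n) → Finset (ZMod n)
  | [] => ∅
  | a :: l => insert a ((ssums n l) ∪ (ssums n l).image (· + a))

private lemma ssums_mem (n : ℕ) (l : List (ZMod n)) :
    ∀ x ∈ ssums n l, ∃ s : Multiset (ZMod n), s ≤ (l : Multiset (ZMod n)) ∧ s ≠ 0 ∧ s.sum = x := by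
  induction l with
  | nil => simp [ssums]
  | cons a l ih =>
    intro x hx
    simp only [ssums, Finset.mem_insert, Finset.mem_union, Finset.mem_image] at hx
    rcases hx with rfl | hx | ⟨y, hy, rfl⟩
    · exact ⟨{x}, by
        simpa using Multiset.cons_le_cons x (Multiset.zero_le _), by simp, by simp⟩
    · obtain ⟨s, hs, hs0, hsum⟩ := ih x hx
      exact ⟨s, le_trans hs (Multiset.le_cons_self _ _), hs0, hsum⟩
    · obtain ⟨s, hs, hs0, hsum⟩ := ih y hy
      refine ⟨a ::ₘ s, Multiset.cons_le_cons a hs, by simp, ?_⟩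
      rw [Multiset.sum_cons, hsum, add_comm]

private lemma ssums_card (n : ℕ) (hn : 0 < n) (l : List (ZMod n))
    (hl : ∀ a ∈ l, IsUnit a) : min n l.length ≤ (ssums n l).card := by
  haveI : NeZero n := ⟨hn.ne'⟩
  induction l with
  | nil => simp
  | cons a l ih =>
    have ha : IsUnit a := hl a ((List.mem_cons_self (a := a) (l := l)))
    have ih' := ih (fun b hb => hl b (List.mem_cons_of_mem a hb))
    set S := ssums n l with hS
    by_cases hclosed : ∀ y ∈ S, y + a ∈ S
    · rcases S.eq_empty_or_nonempty with hemp | ⟨y, hy⟩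
      · -- S empty: then min n l.length = 0, so l.length = 0 since n > 0
        have : min n l.length = 0 := by
          have := ih'; rw [hemp] at this; simpa using le_antisymm (this.trans (by simp)) (Nat.zero_le _)
        have hlen : l.length = 0 := by omega
        have h1 : (1 : ℕ) ≤ (ssums n (a :: l)).card := by
          have : a ∈ ssums n (a :: l) := by simp [ssums]
          exact Finset.card_pos.mpr ⟨a, this⟩
        have hlen1 : (a :: l).length = 1 := by simp [hlen]
        rw [hlen1]
        omega
      · -- S nonempty and closed under +a, with a a unit: S = univ
        have hstep : ∀ k : ℕ, y + k • a ∈ S := by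
          intro k
          induction k with
          | zero => simpa using hy
          | succ k ihk =>
            have : y + (k + 1) • a = (y + k • a) + a := by
              rw [succ_nsmul]; ring
            rw [this]; exact hclosed _ ihk
        have huniv : S = Finset.univ := by
          apply Finset.eq_univ_of_forall
          intro z
          obtain ⟨b, hb⟩ := isUnit_iff_exists.mp ha
          have hk : (((z - y) * b).val : ZMod n) = (z - y) * b := by
            simp [ZMod.natCast_val, ZMod.cast_id]
          have := hstep ((z - y) * b).val
          rwa [nsmul_eq_mul, hk, mul_assoc, mul_comm b a, hb.1, mul_one,
            add_sub_cancel] at this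
        have hsub : S ⊆ ssums n (a :: l) := by
          intro z hz
          simp only [ssums, Finset.mem_insert, Finset.mem_union]
          exact Or.inr (Or.inl hz)
        have := Finset.card_le_card hsub
        rw [huniv, Finset.card_univ, ZMod.card] at this
        omega
    · push_neg at hclosed
      obtain ⟨y, hy, hya⟩ := hclosed
      have hsub : insert (y + a) S ⊆ ssums n (a :: l) := by
        intro z hz
        simp only [Finset.mem_insert] at hz
        simp only [ssums, Finset.mem_insert, Finset.mem_union, Finset.mem_image]
        rcases hz with rfl | hz
        · exact Or.inr (Or.inr ⟨y, hy, rfl⟩)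
        · exact Or.inr (Or.inl hz)
      have h1 : S.card + 1 ≤ (ssums n (a :: l)).card := by
        have := Finset.card_le_card hsub
        rwa [Finset.card_insert_of_notMem hya] at this
      simp only [List.length_cons]
      omega

theorem vu_units_complete (n : ℕ) (hn : 0 < n) (A : Multiset (ZMod n))
    (hA : ∀ a ∈ A, IsUnit a) (hcard : n ≤ Multiset.card A) :
    ∀ x : ZMod n, ∃ s : Multiset (ZMod n), s ≤ A ∧ s ≠ 0 ∧ s.sum = x := by
  haveI : NeZero n := ⟨hn.ne'⟩
  intro x
  set l := A.toList with hl
  have hlA : (l : Multiset (ZMod n)) = A := Multiset.coe_toList A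
  have hlen : n ≤ l.length := by
    rw [← Multiset.coe_card, hlA]; exact hcard
  have hunits : ∀ a ∈ l, IsUnit a := by
    intro a hal
    apply hA
    rw [← hlA]; exact_mod_cast hal
  have hcardS := ssums_card n hn l hunits
  rw [min_eq_left hlen] at hcardS
  have huniv : ssums n l = Finset.univ := by
    apply Finset.eq_univ_of_card
    have : (ssums n l).card ≤ Finset.univ.card := Finset.card_le_card (Finset.subset_univ _)
    rw [Finset.card_univ, ZMod.card] at *
    omega
  have hx : x ∈ ssums n l := huniv ▸ Finset.mem_univ x
  obtain ⟨s, hs, hs0, hsum⟩ := ssums_mem n l x hx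
  exact ⟨s, hlA ▸ hs, hs0, hsum⟩
end

section
/- Let d ≥ 1, M_1,…,M_d be positive integers, L = M_1⋯M_d, and define a_1 = 1 and a_n = 2L·Σ_{i=1}^{n-1} a_i M_i + 1 for 2 ≤ n ≤ d. Then the map ψ : [M_1 L] × ⋯ × [M_d L] → ℤ given by ψ(x_1,…,x_d) = Σ_{i=1}^d a_i x_i is injective, its image is contained in [1, 4^d (M_1⋯M_d)^{d+1}], and ψ is a Freiman 2-isomorphism onto its image (i.e., ψ(x)+ψ(y) = ψ(z)+ψ(w) if and only if x+y = z+w for x,y,z,w in the box). -/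
theorem freiman_iso_box (d : ℕ) (hd : 1 ≤ d) (M : ℕ → ℕ)
    (hM : ∀ i ∈ Finset.Icc 1 d, 0 < M i)
    (L : ℕ) (hL : L = ∏ i ∈ Finset.Icc 1 d, M i)
    (a : ℕ → ℕ) (ha1 : a 1 = 1)
    (harec : ∀ n, 2 ≤ n → n ≤ d →
      a n = 2 * L * (∑ i ∈ Finset.Icc 1 (n - 1), a i * M i) + 1) :
    (∀ x y : ℕ → ℕ,
        (∀ i ∈ Finset.Icc 1 d, x i ∈ Finset.Icc 1 (M i * L)) →
        (∀ i ∈ Finset.Icc 1 d, y i ∈ Finset.Icc 1 (M i * L)) →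
        (∑ i ∈ Finset.Icc 1 d, a i * x i) = (∑ i ∈ Finset.Icc 1 d, a i * y i) →
        ∀ i ∈ Finset.Icc 1 d, x i = y i) ∧
    (∀ x : ℕ → ℕ, (∀ i ∈ Finset.Icc 1 d, x i ∈ Finset.Icc 1 (M i * L)) →
        (∑ i ∈ Finset.Icc 1 d, a i * x i) ∈
          Finset.Icc 1 (4 ^ d * (∏ i ∈ Finset.Icc 1 d, M i) ^ (d + 1))) ∧
    (∀ x y z w : ℕ → ℕ,
        (∀ i ∈ Finset.Icc 1 d, x i ∈ Finset.Icc 1 (M i * L)) →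
        (∀ i ∈ Finset.Icc 1 d, y i ∈ Finset.Icc 1 (M i * L)) →
        (∀ i ∈ Finset.Icc 1 d, z i ∈ Finset.Icc 1 (M i * L)) →
        (∀ i ∈ Finset.Icc 1 d, w i ∈ Finset.Icc 1 (M i * L)) →
        ((∑ i ∈ Finset.Icc 1 d, a i * x i) + (∑ i ∈ Finset.Icc 1 d, a i * y i) =
            (∑ i ∈ Finset.Icc 1 d, a i * z i) + (∑ i ∈ Finset.Icc 1 d, a i * w i) ↔
          ∀ i ∈ Finset.Icc 1 d, x i + y i = z i + w i)) := by
  have hL1 : 1 ≤ L := by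
    rw [hL]; exact Finset.one_le_prod' fun i hi => hM i hi
  have hapos : ∀ i, 1 ≤ i → i ≤ d → 1 ≤ a i := by
    intro i h1 h2
    rcases eq_or_lt_of_le h1 with h | h
    · subst h; omega
    · rw [harec i h h2]; omega
  -- bound on sums of a i * w i with w i ≤ 2 * (M i * L)
  have hbnd : ∀ n, n ≤ d → ∀ w : ℕ → ℕ, (∀ i ∈ Finset.Icc 1 n, w i ≤ 2 * (M i * L)) →
      ∑ i ∈ Finset.Icc 1 n, a i * w i ≤ 2 * L * ∑ i ∈ Finset.Icc 1 n, a i * M i := by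
    intro n hn w hw
    calc ∑ i ∈ Finset.Icc 1 n, a i * w i
        ≤ ∑ i ∈ Finset.Icc 1 n, 2 * L * (a i * M i) := by
          apply Finset.sum_le_sum
          intro i hi
          have := hw i hi
          calc a i * w i ≤ a i * (2 * (M i * L)) := Nat.mul_le_mul_left _ this
            _ = 2 * L * (a i * M i) := by ring
      _ = 2 * L * ∑ i ∈ Finset.Icc 1 n, a i * M i := by rw [Finset.mul_sum]
  -- key cancellation lemma
  have key : ∀ n, 1 ≤ n → n ≤ d → ∀ u v : ℕ → ℕ,
      (∀ i ∈ Finset.Icc 1 n, 1 ≤ u i ∧ u i ≤ 2 * (M i * L)) →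
      (∀ i ∈ Finset.Icc 1 n, 1 ≤ v i ∧ v i ≤ 2 * (M i * L)) →
      ∑ i ∈ Finset.Icc 1 n, a i * u i = ∑ i ∈ Finset.Icc 1 n, a i * v i →
      ∀ i ∈ Finset.Icc 1 n, u i = v i := by
    intro n
    induction n with
    | zero => omega
    | succ n ih =>
      intro _ hle u v hu hv hsum
      by_cases hn : n = 0
      · subst hn
        intro i hi
        simp only [Finset.mem_Icc] at hi
        have hi1 : i = 1 := by omega
        subst hi1
        simpa [Finset.Icc_self, ha1] using hsum
      · have hn1 : 1 ≤ n := by omega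
        rw [Finset.sum_Icc_succ_top (by omega), Finset.sum_Icc_succ_top (by omega)] at hsum
        -- bounds on partial sums
        have hA : ∑ i ∈ Finset.Icc 1 n, a i * u i ≤ 2 * L * ∑ i ∈ Finset.Icc 1 n, a i * M i :=
          hbnd n (by omega) u (fun i hi => (hu i (by simp only [Finset.mem_Icc] at hi ⊢; omega)).2)
        have hB : ∑ i ∈ Finset.Icc 1 n, a i * v i ≤ 2 * L * ∑ i ∈ Finset.Icc 1 n, a i * M i :=
          hbnd n (by omega) v (fun i hi => (hv i (by simp only [Finset.mem_Icc] at hi ⊢; omega)).2)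
        have han : a (n + 1) = 2 * L * ∑ i ∈ Finset.Icc 1 n, a i * M i + 1 := by
          have := harec (n + 1) (by omega) hle
          simpa using this
        -- show top coordinates equal
        have htop : u (n + 1) = v (n + 1) := by
          rcases lt_trichotomy (u (n + 1)) (v (n + 1)) with h | h | h
          · exfalso
            have h1 : u (n + 1) + 1 ≤ v (n + 1) := h
            have h2 : a (n + 1) * (u (n + 1) + 1) ≤ a (n + 1) * v (n + 1) :=
              Nat.mul_le_mul_left _ h1
            rw [Nat.mul_add, Nat.mul_one] at h2
            omega
          · exact h
          · exfalso
            have h1 : v (n + 1) + 1 ≤ u (n + 1) := h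
            have h2 : a (n + 1) * (v (n + 1) + 1) ≤ a (n + 1) * u (n + 1) :=
              Nat.mul_le_mul_left _ h1
            rw [Nat.mul_add, Nat.mul_one] at h2
            omega
        have hrest : ∑ i ∈ Finset.Icc 1 n, a i * u i = ∑ i ∈ Finset.Icc 1 n, a i * v i := by
          rw [htop] at hsum; omega
        intro i hi
        simp only [Finset.mem_Icc] at hi
        rcases Nat.lt_or_ge i (n + 1) with h | h
        · exact ih hn1 (by omega) u v
            (fun j hj => hu j (by simp only [Finset.mem_Icc] at hj ⊢; omega))
            (fun j hj => hv j (by simp only [Finset.mem_Icc] at hj ⊢; omega))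
            hrest i (by simp only [Finset.mem_Icc]; omega)
        · have : i = n + 1 := by omega
          rw [this]; exact htop
  -- bound on T n = sum of a i * M i
  have hT : ∀ n, 1 ≤ n → n ≤ d →
      4 * L * ∑ i ∈ Finset.Icc 1 n, a i * M i ≤
        4 ^ n * L ^ n * ∏ i ∈ Finset.Icc 1 n, M i := by
    intro n
    induction n with
    | zero => omega
    | succ n ih =>
      intro _ hle
      by_cases hn : n = 0
      · subst hn
        simp only [Finset.Icc_self, Finset.sum_singleton, Finset.prod_singleton, ha1, pow_one]
        exact le_of_eq (by ring)
      · have hn1 : 1 ≤ n := by omega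
        have IH := ih hn1 (by omega)
        have han : a (n + 1) = 2 * L * ∑ i ∈ Finset.Icc 1 n, a i * M i + 1 := by
          simpa using harec (n + 1) (by omega) hle
        rw [Finset.sum_Icc_succ_top (by omega), Finset.prod_Icc_succ_top (by omega)]
        set T := ∑ i ∈ Finset.Icc 1 n, a i * M i with hTdef
        set P := ∏ i ∈ Finset.Icc 1 n, M i with hPdef
        have hP1 : 1 ≤ P := Finset.one_le_prod' fun i hi => by
          exact hM i (by simp only [Finset.mem_Icc] at hi ⊢; omega)
        have hM1 : 1 ≤ M (n + 1) := hM (n + 1) (by simp only [Finset.mem_Icc]; omega)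
        have h4 : 4 ≤ 4 ^ n := by
          calc 4 = 4 ^ 1 := by norm_num
            _ ≤ 4 ^ n := Nat.pow_le_pow_right (by norm_num) hn1
        have hLn : L ≤ L ^ n := by
          calc L = L ^ 1 := (pow_one L).symm
            _ ≤ L ^ n := Nat.pow_le_pow_right hL1 hn1
        rw [han]
        -- goal: 4 * L * (T + (2*L*T+1) * M (n+1)) ≤ 4^(n+1) * L^(n+1) * (P * M (n+1))
        have key1 : 4 * L * T ≤ 4 ^ n * L ^ n * P := IH
        have e1 : 4 ^ (n + 1) * L ^ (n + 1) * (P * M (n + 1)) =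
            4 * L * (4 ^ n * L ^ n * P * M (n + 1)) := by ring
        rw [e1]
        apply Nat.mul_le_mul_left
        -- T + (2*L*T+1) * M (n+1) ≤ 4^n * L^n * P * M (n+1)
        have hLM : 1 ≤ L * M (n + 1) := Nat.mul_le_mul hL1 hM1
        have hT1 : 1 ≤ T := by
          have h1mem : (1 : ℕ) ∈ Finset.Icc 1 n := by simp only [Finset.mem_Icc]; omega
          have hM1' : 1 ≤ M 1 := hM 1 (by simp only [Finset.mem_Icc]; omega)
          calc 1 ≤ a 1 * M 1 := by rw [ha1]; omega
            _ ≤ T := Finset.single_le_sum (f := fun i => a i * M i)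
                (fun i _ => Nat.zero_le _) h1mem
        have f1 : 4 * L * T * M (n + 1) ≤ 4 ^ n * L ^ n * P * M (n + 1) :=
          Nat.mul_le_mul_right _ key1
        have f2 : T ≤ L * T * M (n + 1) := by
          calc T = T * 1 := (mul_one T).symm
            _ ≤ T * (L * M (n + 1)) := Nat.mul_le_mul_left _ hLM
            _ = L * T * M (n + 1) := by ring
        have f3 : M (n + 1) ≤ L * T * M (n + 1) := by
          have : 1 ≤ L * T := Nat.mul_le_mul hL1 hT1
          calc M (n + 1) = 1 * M (n + 1) := (one_mul _).symm
            _ ≤ L * T * M (n + 1) := Nat.mul_le_mul_right _ this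
        nlinarith [f1, f2, f3]
  -- derive the three parts
  have part3 : ∀ x y z w : ℕ → ℕ,
      (∀ i ∈ Finset.Icc 1 d, x i ∈ Finset.Icc 1 (M i * L)) →
      (∀ i ∈ Finset.Icc 1 d, y i ∈ Finset.Icc 1 (M i * L)) →
      (∀ i ∈ Finset.Icc 1 d, z i ∈ Finset.Icc 1 (M i * L)) →
      (∀ i ∈ Finset.Icc 1 d, w i ∈ Finset.Icc 1 (M i * L)) →
      ((∑ i ∈ Finset.Icc 1 d, a i * x i) + (∑ i ∈ Finset.Icc 1 d, a i * y i) =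
          (∑ i ∈ Finset.Icc 1 d, a i * z i) + (∑ i ∈ Finset.Icc 1 d, a i * w i) ↔
        ∀ i ∈ Finset.Icc 1 d, x i + y i = z i + w i) := by
    intro x y z w hx hy hz hw
    have exy : (∑ i ∈ Finset.Icc 1 d, a i * x i) + (∑ i ∈ Finset.Icc 1 d, a i * y i) =
        ∑ i ∈ Finset.Icc 1 d, a i * (x i + y i) := by
      rw [← Finset.sum_add_distrib]
      exact Finset.sum_congr rfl fun i _ => by ring
    have ezw : (∑ i ∈ Finset.Icc 1 d, a i * z i) + (∑ i ∈ Finset.Icc 1 d, a i * w i) =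
        ∑ i ∈ Finset.Icc 1 d, a i * (z i + w i) := by
      rw [← Finset.sum_add_distrib]
      exact Finset.sum_congr rfl fun i _ => by ring
    constructor
    · intro hsum
      rw [exy, ezw] at hsum
      exact key d hd le_rfl (fun i => x i + y i) (fun i => z i + w i)
        (fun i hi => by
          have h1 := hx i hi; have h2 := hy i hi
          simp only [Finset.mem_Icc] at h1 h2
          show 1 ≤ x i + y i ∧ x i + y i ≤ 2 * (M i * L); omega)
        (fun i hi => by
          have h1 := hz i hi; have h2 := hw i hi
          simp only [Finset.mem_Icc] at h1 h2
          show 1 ≤ z i + w i ∧ z i + w i ≤ 2 * (M i * L); omega)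
        hsum
    · intro h
      rw [exy, ezw]
      exact Finset.sum_congr rfl fun i hi => by rw [h i hi]
  refine ⟨?_, ?_, part3⟩
  · intro x y hx hy hsum i hi
    exact key d hd le_rfl x y
      (fun j hj => by
        have := hx j hj; simp only [Finset.mem_Icc] at this; omega)
      (fun j hj => by
        have := hy j hj; simp only [Finset.mem_Icc] at this; omega)
      hsum i hi
  · intro x hx
    simp only [Finset.mem_Icc]
    constructor
    · have h1 : (1 : ℕ) ∈ Finset.Icc 1 d := by simp only [Finset.mem_Icc]; omega
      have hx1 := hx 1 h1
      simp only [Finset.mem_Icc] at hx1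
      have hax : 1 ≤ a 1 := hapos 1 le_rfl hd
      calc 1 = 1 * 1 := by norm_num
        _ ≤ a 1 * x 1 := Nat.mul_le_mul hax hx1.1
        _ ≤ ∑ i ∈ Finset.Icc 1 d, a i * x i :=
          Finset.single_le_sum (f := fun i => a i * x i) (fun i _ => Nat.zero_le _) h1
    · have h1 : ∑ i ∈ Finset.Icc 1 d, a i * x i ≤
          L * ∑ i ∈ Finset.Icc 1 d, a i * M i := by
        rw [Finset.mul_sum]
        apply Finset.sum_le_sum
        intro i hi
        have := hx i hi; simp only [Finset.mem_Icc] at this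
        calc a i * x i ≤ a i * (M i * L) := Nat.mul_le_mul_left _ this.2
          _ = L * (a i * M i) := by ring
      have h2 := hT d hd le_rfl
      rw [← hL]
      have h3 : 4 * (L * ∑ i ∈ Finset.Icc 1 d, a i * M i) ≤ 4 ^ d * L ^ d * L := by
        calc 4 * (L * ∑ i ∈ Finset.Icc 1 d, a i * M i)
            = 4 * L * ∑ i ∈ Finset.Icc 1 d, a i * M i := by ring
          _ ≤ 4 ^ d * L ^ d * ∏ i ∈ Finset.Icc 1 d, M i := h2
          _ = 4 ^ d * L ^ d * L := by rw [← hL]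
      have h4 : 4 ^ d * L ^ d * L = 4 ^ d * L ^ (d + 1) := by ring
      omega
end

section
/- Let A be a finite multiset of positive integers with |A| = 2ℓ even. Then either some element of A has multiplicity at least ℓ (in which case Σ*(A) contains the arithmetic progression {a, 2a, …, ℓa} for that element a), or A can be partitioned into ℓ sub-multisets A_1, …, A_ℓ each consisting of exactly two distinct elements; in the latter case A_1 + A_2 + ⋯ + A_ℓ ⊆ Σ*(A) where each A_i is a 2-element set. -/
lemma pairing_aux : ∀ ℓ (A : Multiset ℕ), Multiset.card A = 2 * ℓ →
    (∀ a, A.count a ≤ ℓ) →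
    ∃ f : Fin ℓ → Multiset ℕ, (∑ i, f i) = A ∧
      ∀ i, ∃ a b : ℕ, a ≠ b ∧ f i = {a, b} := by
  intro ℓ
  induction ℓ with
  | zero =>
    intro A hc _
    refine ⟨fun i => 0, ?_, fun i => i.elim0⟩
    simp at hc ⊢
    exact hc.symm
  | succ n ih =>
    intro A hc hcount
    have hA : A.toFinset.Nonempty := by
      rw [Multiset.toFinset_nonempty]
      intro h; simp [h] at hc
    obtain ⟨a, ha, hamax⟩ := A.toFinset.exists_max_image (fun x => A.count x) hA
    have haA : a ∈ A := Multiset.mem_toFinset.mp ha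
    have hb' : ∃ b ∈ A, b ≠ a := by
      by_contra h
      push_neg at h
      have : A.count a = Multiset.card A := by
        rw [Multiset.count_eq_card]
        intro x hx; exact (h x hx).symm
      have := hcount a
      omega
    obtain ⟨b0, hb0A, hb0a⟩ := hb'
    have hS : (A.toFinset.erase a).Nonempty :=
      ⟨b0, Finset.mem_erase.mpr ⟨hb0a, Multiset.mem_toFinset.mpr hb0A⟩⟩
    obtain ⟨b, hbS, hbmax⟩ := (A.toFinset.erase a).exists_max_image (fun x => A.count x) hS
    have hba : b ≠ a := (Finset.mem_erase.mp hbS).1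
    have hbA : b ∈ A := Multiset.mem_toFinset.mp (Finset.mem_erase.mp hbS).2
    have hPcount : ∀ c, (({a, b} : Multiset ℕ).count c) = (if c = a then 1 else 0) + (if c = b then 1 else 0) := by
      intro c
      rw [Multiset.insert_eq_cons, Multiset.count_cons, Multiset.count_singleton]
      by_cases h1 : c = a <;> by_cases h2 : c = b <;> simp_all <;> omega
    have hP : ({a, b} : Multiset ℕ) ≤ A := by
      rw [Multiset.le_iff_count]
      intro c
      rw [hPcount]
      by_cases h1 : c = a
      · have := Multiset.one_le_count_iff_mem.mpr haA
        simp only [h1, if_pos rfl, if_true, if_neg (Ne.symm hba)]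
        omega
      · by_cases h2 : c = b
        · have := Multiset.one_le_count_iff_mem.mpr hbA
          simp only [h2, if_neg hba, if_pos rfl, if_true]
          omega
        · simp [h1, h2]
    set A' := A - {a, b} with hA'
    have hsum : A' + {a, b} = A := tsub_add_cancel_of_le hP
    have hA'card : Multiset.card A' = 2 * n := by
      have := Multiset.card_le_card hP
      have h2 : Multiset.card A' + Multiset.card ({a, b} : Multiset ℕ) = Multiset.card A := by
        rw [← Multiset.card_add, hsum]
      simp at h2 ⊢
      omega
    have hA'count : ∀ c, A'.count c ≤ n := by
      intro c
      rw [hA', Multiset.count_sub, hPcount]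
      by_cases h1 : c = a
      · have := hcount a; simp only [h1, if_pos rfl, if_true, if_neg (Ne.symm hba)]; omega
      · by_cases h2 : c = b
        · have := hcount b; simp only [h2, if_neg hba, if_pos rfl, if_true]; omega
        · simp [h1, h2]
          by_cases hcA : c ∈ A
          · have h3 : A.count c ≤ A.count b := hbmax c (Finset.mem_erase.mpr ⟨h1, Multiset.mem_toFinset.mpr hcA⟩)
            have h4 : A.count b ≤ A.count a := hamax b (Multiset.mem_toFinset.mpr hbA)
            by_contra hcon
            push_neg at hcon
            -- counts of a, b, c all ≥ n+1, distinct elements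
            have hT : (Multiset.replicate (A.count a) a + Multiset.replicate (A.count b) b + Multiset.replicate (A.count c) c) ≤ A := by
              rw [Multiset.le_iff_count]
              intro d
              simp only [Multiset.count_add, Multiset.count_replicate]
              by_cases e1 : d = a
              · simp [e1, hba, h1]
              · by_cases e2 : d = b
                · simp [e2, Ne.symm hba, h2]
                · by_cases e3 : d = c
                  · simp [e3, Ne.symm h1, Ne.symm h2]
                  · simp [Ne.symm e1, Ne.symm e2, Ne.symm e3]
            have := Multiset.card_le_card hT
            simp [Multiset.card_replicate] at this
            have := hcount a
            omega
          · rw [Multiset.count_eq_zero_of_notMem hcA]; omega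
    obtain ⟨f', hf'sum, hf'pairs⟩ := ih A' hA'card hA'count
    refine ⟨Fin.cons {a, b} f', ?_, ?_⟩
    · rw [Fin.sum_cons, hf'sum, add_comm, hsum]
    · intro i
      refine Fin.cases ?_ ?_ i
      · exact ⟨a, b, Ne.symm hba, rfl⟩
      · intro j; exact hf'pairs j

theorem multiset_pairing_dichotomy (A : Multiset ℕ) (hpos : ∀ a ∈ A, 0 < a)
    (ℓ : ℕ) (hℓ : 0 < ℓ) (hcard : Multiset.card A = 2 * ℓ) :
    (∃ a ∈ A, ℓ ≤ A.count a ∧ ∀ j, 1 ≤ j → j ≤ ℓ →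
        ∃ s : Multiset ℕ, s ≤ A ∧ s ≠ 0 ∧ s.sum = j * a) ∨
    (∃ f : Fin ℓ → Multiset ℕ, (∑ i, f i) = A ∧
      (∀ i, Multiset.card (f i) = 2 ∧ (f i).toFinset.card = 2) ∧
      ∀ g : Fin ℓ → ℕ, (∀ i, g i ∈ f i) →
        ∃ s : Multiset ℕ, s ≤ A ∧ s ≠ 0 ∧ s.sum = ∑ i, g i) := by
  by_cases hbig : ∃ a ∈ A, ℓ ≤ A.count a
  · obtain ⟨a, haA, hcnt⟩ := hbig
    left
    refine ⟨a, haA, hcnt, ?_⟩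
    intro j hj1 hjℓ
    refine ⟨Multiset.replicate j a, ?_, ?_, ?_⟩
    · exact Multiset.le_count_iff_replicate_le.mp (le_trans hjℓ hcnt)
    · simp only [ne_eq, ← Multiset.card_eq_zero, Multiset.card_replicate]; omega
    · rw [Multiset.sum_replicate, smul_eq_mul]
  · right
    push_neg at hbig
    have hcount : ∀ a, A.count a ≤ ℓ := by
      intro a
      by_cases h : a ∈ A
      · exact le_of_lt (hbig a h)
      · rw [Multiset.count_eq_zero_of_notMem h]; omega
    obtain ⟨f, hfsum, hfpairs⟩ := pairing_aux ℓ A hcard hcount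
    refine ⟨f, hfsum, ?_, ?_⟩
    · intro i
      obtain ⟨a, b, hab, hfi⟩ := hfpairs i
      rw [hfi]
      constructor
      · simp
      · rw [Multiset.insert_eq_cons, Multiset.toFinset_cons, Multiset.toFinset_singleton]
        rw [Finset.card_insert_of_notMem (by simp [hab])]
        simp
    · intro g hg
      refine ⟨∑ i, ({g i} : Multiset ℕ), ?_, ?_, ?_⟩
      · rw [← hfsum]
        exact Finset.sum_le_sum fun i _ => Multiset.singleton_le.mpr (hg i)
      · intro h
        have h0 : ({g ⟨0, hℓ⟩} : Multiset ℕ) ≤ ∑ i, ({g i} : Multiset ℕ) :=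
          Finset.single_le_sum (f := fun i => ({g i} : Multiset ℕ)) (fun i _ => zero_le) (Finset.mem_univ (⟨0, hℓ⟩ : Fin ℓ))
        rw [h] at h0
        simp at h0
      · rw [Multiset.sum_sum]
        simp
end

section
/- Suppose a_0 is a nonnegative integer and a_1, …, a_d ∈ {1,…,N} are positive integers (not necessarily distinct) such that every element of the Hilbert cube H(a_0; a_1,…,a_d) is a powerful number, where the Hilbert cube is a_0 + {0,a_1} + ⋯ + {0,a_d} if a_0 > 0, and is the set of nonempty subset sums if a_0 = 0. Then d ≤ C·log N for some absolute constant C (for all N ≥ 2). -/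
open Finset

def Powerful (n : ℕ) : Prop := ∀ p : ℕ, p.Prime → p ∣ n → p ^ 2 ∣ n


variable {d : ℕ}

def reach (p : ℕ) (a : Fin d → ℕ) (R : Finset (Fin d)) : Finset (ZMod p) :=
  R.powerset.image (fun x => ((∑ i ∈ x, a i : ℕ) : ZMod p))

lemma zero_mem_reach (p : ℕ) (a : Fin d → ℕ) (R : Finset (Fin d)) :
    (0 : ZMod p) ∈ reach p a R := by
  apply Finset.mem_image.mpr
  exact ⟨∅, by simp⟩

lemma reach_insert (p : ℕ) (a : Fin d → ℕ) (R : Finset (Fin d)) (i : Fin d) (hi : i ∉ R) :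
    reach p a (insert i R) = reach p a R ∪ (reach p a R).image (fun z => z + (a i : ZMod p)) := by
  ext z
  simp only [reach, Finset.mem_union, Finset.mem_image, Finset.mem_powerset]
  constructor
  · rintro ⟨x, hx, rfl⟩
    by_cases hix : i ∈ x
    · right
      refine ⟨((∑ j ∈ x.erase i, a j : ℕ) : ZMod p), ⟨x.erase i, ?_, rfl⟩, ?_⟩
      · intro j hj
        have := hx (Finset.mem_of_mem_erase hj)
        rcases Finset.mem_insert.mp this with h | h
        · exact absurd (h ▸ hj) (Finset.notMem_erase i x)
        · exact h
      · rw [← Finset.add_sum_erase _ _ hix]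
        push_cast
        ring
    · left
      refine ⟨x, ?_, rfl⟩
      intro j hj
      rcases Finset.mem_insert.mp (hx hj) with h | h
      · exact absurd (h ▸ hj) hix
      · exact h
  · rintro (⟨x, hx, rfl⟩ | ⟨z', ⟨x, hx, rfl⟩, rfl⟩)
    · exact ⟨x, hx.trans (Finset.subset_insert i R), rfl⟩
    · refine ⟨insert i x, Finset.insert_subset_insert i hx, ?_⟩
      rw [Finset.sum_insert (fun h => hi (hx h))]
      push_cast
      ring

lemma closed_all {p : ℕ} (hp : p.Prime) (A : Finset (ZMod p)) (hA : A.Nonempty)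
    (u : ZMod p) (hu : u ≠ 0) (hcl : ∀ z ∈ A, z + u ∈ A) : ∀ z : ZMod p, z ∈ A := by
  haveI : Fact p.Prime := ⟨hp⟩
  obtain ⟨x₀, hx₀⟩ := hA
  have key : ∀ n : ℕ, x₀ + n • u ∈ A := by
    intro n
    induction n with
    | zero => simpa using hx₀
    | succ n ih =>
      have := hcl _ ih
      rw [succ_nsmul]
      rw [← add_assoc]
      exact this
  intro z
  have : z = x₀ + (((z - x₀) * u⁻¹).val : ℕ) • u := by
    rw [nsmul_eq_mul, ZMod.natCast_val, ZMod.cast_id]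
    field_simp
    ring
  rw [this]
  exact key _

lemma reach_card {p : ℕ} (hp : p.Prime) (a : Fin d → ℕ) (R : Finset (Fin d))
    (hR : ∀ i ∈ R, ¬ (p ∣ a i)) :
    min p (R.card + 1) ≤ (reach p a R).card := by
  haveI : Fact p.Prime := ⟨hp⟩
  induction R using Finset.induction_on with
  | empty =>
    have : (0 : ZMod p) ∈ reach p a ∅ := zero_mem_reach p a ∅
    have h1 : 1 ≤ (reach p a ∅).card := Finset.card_pos.mpr ⟨0, this⟩
    simpa using (min_le_right p 1).trans h1
  | @insert i R hi ih =>
    have hR' : ∀ j ∈ R, ¬ (p ∣ a j) := fun j hj => hR j (Finset.mem_insert_of_mem hj)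
    have ihR := ih hR'
    rw [reach_insert p a R i hi]
    have hu : ((a i : ℕ) : ZMod p) ≠ 0 := by
      intro h
      exact hR i (Finset.mem_insert_self i R) ((ZMod.natCast_eq_zero_iff _ _).mp h)
    by_cases hclosed : ∀ z ∈ reach p a R, z + ((a i : ℕ) : ZMod p) ∈ reach p a R
    · -- reach R is everything
      have hall := closed_all hp _ ⟨0, zero_mem_reach p a R⟩ _ hu hclosed
      have hple : p ≤ (reach p a R).card := by
        have : (Finset.univ : Finset (ZMod p)) ⊆ reach p a R := fun z _ => hall z
        calc p = (Finset.univ : Finset (ZMod p)).card := by simp [ZMod.card]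
          _ ≤ _ := Finset.card_le_card this
      calc min p _ ≤ p := min_le_left _ _
        _ ≤ (reach p a R).card := hple
        _ ≤ _ := Finset.card_le_card Finset.subset_union_left
    · push_neg at hclosed
      obtain ⟨z, hz, hznew⟩ := hclosed
      have hzB : z + ((a i : ℕ) : ZMod p) ∈ (reach p a R).image (fun w => w + ((a i : ℕ) : ZMod p)) :=
        Finset.mem_image_of_mem _ hz
      have hsub : reach p a R ⊂ reach p a R ∪ _ :=
        Finset.ssubset_iff_of_subset Finset.subset_union_left |>.mpr
          ⟨z + ((a i : ℕ) : ZMod p), Finset.mem_union_right _ hzB, hznew⟩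
      have hcard : (reach p a R).card + 1 ≤ (reach p a R ∪ (reach p a R).image (fun w => w + ((a i : ℕ) : ZMod p))).card :=
        Finset.card_lt_card hsub
      rw [Finset.card_insert_of_notMem hi]
      omega

/-- Coverage: any `p-1` units reach every target mod `p`. -/
lemma coverage {p : ℕ} (hp : p.Prime) (a : Fin d → ℕ) (R : Finset (Fin d))
    (hR : ∀ i ∈ R, ¬ (p ∣ a i)) (hcard : p - 1 ≤ R.card) (t : ZMod p) :
    ∃ x ⊆ R, ((∑ i ∈ x, a i : ℕ) : ZMod p) = t := by
  haveI : Fact p.Prime := ⟨hp⟩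
  have h1 : p ≤ min p (R.card + 1) := le_min le_rfl (by have := hp.two_le; omega)
  have h2 := (h1.trans (reach_card hp a R hR))
  have : t ∈ reach p a R := by
    have huniv : ∀ z : ZMod p, z ∈ reach p a R := by
      intro z
      by_contra hz
      have : (reach p a R).card < (Finset.univ : Finset (ZMod p)).card :=
        Finset.card_lt_card ⟨Finset.subset_univ _, fun hsub => hz (hsub (Finset.mem_univ z))⟩
      rw [Finset.card_univ, ZMod.card] at this
      omega
    exact huniv t
  obtain ⟨x, hx, hxt⟩ := Finset.mem_image.mp this
  exact ⟨x, Finset.mem_powerset.mp hx, hxt⟩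

lemma per_prime (p : ℕ) (hp : p.Prime) (a0 : ℕ) (a : Fin d → ℕ)
    (hcube : ∀ I : Finset (Fin d), (I.Nonempty ∨ a0 ≠ 0) → Powerful (a0 + ∑ i ∈ I, a i)) :
    (Finset.univ.filter (fun i => ¬ (p ∣ a i))).card ≤ 5 * p := by
  haveI : Fact p.Prime := ⟨hp⟩
  by_contra hbig
  push_neg at hbig
  set U := Finset.univ.filter (fun i => ¬ (p ∣ a i)) with hU
  have hUmem : ∀ i ∈ U, ¬ (p ∣ a i) := by
    intro i hi; exact (Finset.mem_filter.mp hi).2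
  -- extract 5 disjoint blocks of size p inside U
  obtain ⟨Q, hQsub, hQcard⟩ := Finset.exists_subset_card_eq (le_of_lt (by omega : p < U.card))
  have h1 : 4 * p < (U \ Q).card := by
    have := Finset.card_sdiff_of_subset hQsub
    omega
  obtain ⟨R1, hR1sub, hR1card⟩ := Finset.exists_subset_card_eq (le_of_lt (by omega : p < (U \ Q).card))
  have h2 : 3 * p < ((U \ Q) \ R1).card := by
    have := Finset.card_sdiff_of_subset hR1sub
    omega
  obtain ⟨R2, hR2sub, hR2card⟩ := Finset.exists_subset_card_eq (le_of_lt (by omega : p < ((U \ Q) \ R1).card))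
  have h3 : 2 * p < (((U \ Q) \ R1) \ R2).card := by
    have := Finset.card_sdiff_of_subset hR2sub
    omega
  obtain ⟨R3, hR3sub, hR3card⟩ := Finset.exists_subset_card_eq (le_of_lt (by omega : p < (((U \ Q) \ R1) \ R2).card))
  have h4 : p < ((((U \ Q) \ R1) \ R2) \ R3).card := by
    have := Finset.card_sdiff_of_subset hR3sub
    omega
  obtain ⟨R4, hR4sub, hR4card⟩ := Finset.exists_subset_card_eq (le_of_lt h4)
  -- subset and disjointness facts
  have hR1U : R1 ⊆ U := hR1sub.trans (Finset.sdiff_subset)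
  have hR2U : R2 ⊆ U := hR2sub.trans ((Finset.sdiff_subset).trans Finset.sdiff_subset)
  have hR3U : R3 ⊆ U := hR3sub.trans (((Finset.sdiff_subset).trans Finset.sdiff_subset).trans Finset.sdiff_subset)
  have hR4U : R4 ⊆ U :=
    hR4sub.trans ((((Finset.sdiff_subset).trans Finset.sdiff_subset).trans Finset.sdiff_subset).trans Finset.sdiff_subset)
  have hdQ1 : Disjoint Q R1 := Finset.disjoint_right.mpr (fun i hi => (Finset.mem_sdiff.mp (hR1sub hi)).2)
  have hdQ2 : Disjoint Q R2 := Finset.disjoint_right.mpr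
    (fun i hi => (Finset.mem_sdiff.mp (Finset.sdiff_subset (hR2sub hi))).2)
  have hdQ3 : Disjoint Q R3 := Finset.disjoint_right.mpr
    (fun i hi => (Finset.mem_sdiff.mp (Finset.sdiff_subset (Finset.sdiff_subset (hR3sub hi)))).2)
  have hdQ4 : Disjoint Q R4 := Finset.disjoint_right.mpr
    (fun i hi => (Finset.mem_sdiff.mp (Finset.sdiff_subset (Finset.sdiff_subset (Finset.sdiff_subset (hR4sub hi))))).2)
  have hd12 : Disjoint R1 R2 := Finset.disjoint_right.mpr
    (fun i hi => (Finset.mem_sdiff.mp (hR2sub hi)).2)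
  have hd13 : Disjoint R1 R3 := Finset.disjoint_right.mpr
    (fun i hi => (Finset.mem_sdiff.mp (Finset.sdiff_subset (hR3sub hi))).2)
  have hd14 : Disjoint R1 R4 := Finset.disjoint_right.mpr
    (fun i hi => (Finset.mem_sdiff.mp (Finset.sdiff_subset (Finset.sdiff_subset (hR4sub hi)))).2)
  have hd23 : Disjoint R2 R3 := Finset.disjoint_right.mpr
    (fun i hi => (Finset.mem_sdiff.mp (hR3sub hi)).2)
  have hd24 : Disjoint R2 R4 := Finset.disjoint_right.mpr
    (fun i hi => (Finset.mem_sdiff.mp (Finset.sdiff_subset (hR4sub hi))).2)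
  have hd34 : Disjoint R3 R4 := Finset.disjoint_right.mpr
    (fun i hi => (Finset.mem_sdiff.mp (hR4sub hi)).2)
  -- build I₀ with a0 + sum ≡ 0 mod p
  have hp1 : (1 : ℕ) ≤ p := hp.one_lt.le
  obtain ⟨i₀, hi₀Q⟩ : ∃ i, i ∈ Q := Finset.card_pos.mp (by omega : 0 < Q.card) |>.exists_mem
  have hQe : p - 1 ≤ (Q.erase i₀).card := by
    rw [Finset.card_erase_of_mem hi₀Q]; omega
  obtain ⟨x₀, hx₀sub, hx₀sum⟩ := coverage hp a (Q.erase i₀)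
    (fun i hi => hUmem i (hQsub (Finset.mem_of_mem_erase hi))) hQe
    (- ((a0 : ZMod p) + ((a i₀ : ℕ) : ZMod p)))
  set I₀ : Finset (Fin d) := insert i₀ x₀ with hI₀
  have hI₀Q : I₀ ⊆ Q := Finset.insert_subset hi₀Q (hx₀sub.trans (Finset.erase_subset _ _))
  have hi₀x₀ : i₀ ∉ x₀ := fun h => (Finset.notMem_erase i₀ Q) (hx₀sub h)
  have hI₀ne : I₀.Nonempty := ⟨i₀, Finset.mem_insert_self _ _⟩
  have hXzero : ((a0 + ∑ i ∈ I₀, a i : ℕ) : ZMod p) = 0 := by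
    rw [hI₀, Finset.sum_insert hi₀x₀]
    push_cast at hx₀sum ⊢
    rw [hx₀sum]
    ring
  have hX2 : p ^ 2 ∣ (a0 + ∑ i ∈ I₀, a i) := by
    apply hcube I₀ (Or.inl hI₀ne) p hp
    exact (ZMod.natCast_eq_zero_iff _ _).mp hXzero
  -- the zero-sum upgrade (Z)
  have hZ : ∀ S : Finset (Fin d), Disjoint S I₀ → (p ∣ ∑ i ∈ S, a i) →
      ((p : ℕ) ^ 2 ∣ ∑ i ∈ S, a i) := by
    intro S hdisj hpS
    have hsum : a0 + ∑ i ∈ (I₀ ∪ S), a i = (a0 + ∑ i ∈ I₀, a i) + ∑ i ∈ S, a i := by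
      rw [Finset.sum_union hdisj.symm]; ring
    have hptot : p ∣ a0 + ∑ i ∈ (I₀ ∪ S), a i := by
      rw [hsum]
      exact Nat.dvd_add (dvd_trans (dvd_pow_self p two_ne_zero) hX2) hpS
    have htot2 : p ^ 2 ∣ a0 + ∑ i ∈ (I₀ ∪ S), a i :=
      hcube (I₀ ∪ S) (Or.inl (hI₀ne.mono Finset.subset_union_left)) p hp hptot
    have := Nat.dvd_sub htot2 hX2
    rwa [hsum, Nat.add_sub_cancel_left] at this
  -- casts mod p and mod p^2 of sums
  -- (W2): two disjoint sets with equal class have equal sums mod p^2,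
  -- given a free block disjoint from both
  have hW2 : ∀ S T Rf : Finset (Fin d), Disjoint S I₀ → Disjoint T I₀ →
      Rf ⊆ U → Disjoint Rf Q → Disjoint Rf S → Disjoint Rf T →
      Rf.card = p →
      ((∑ i ∈ S, a i : ℕ) : ZMod p) = ((∑ i ∈ T, a i : ℕ) : ZMod p) →
      ((∑ i ∈ S, a i : ℕ) : ZMod (p ^ 2)) = ((∑ i ∈ T, a i : ℕ) : ZMod (p ^ 2)) := by
    intro S T Rf hSI hTI hRfU hRfQ hRfS hRfT hRfcard hclass
    obtain ⟨F, hFsub, hFsum⟩ := coverage hp a Rf (fun i hi => hUmem i (hRfU hi))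
      (by omega) (- ((∑ i ∈ S, a i : ℕ) : ZMod p))
    have hdSF : Disjoint S F := (Finset.disjoint_of_subset_right hFsub hRfS.symm)
    have hdTF : Disjoint T F := (Finset.disjoint_of_subset_right hFsub hRfT.symm)
    have hFI : Disjoint F I₀ :=
      Finset.disjoint_of_subset_left hFsub (Finset.disjoint_of_subset_right hI₀Q hRfQ)
    have key : ∀ W : Finset (Fin d), Disjoint W F → Disjoint W I₀ →
        ((∑ i ∈ W, a i : ℕ) : ZMod p) = ((∑ i ∈ S, a i : ℕ) : ZMod p) →
        ((∑ i ∈ W, a i : ℕ) : ZMod (p ^ 2)) + ((∑ i ∈ F, a i : ℕ) : ZMod (p ^ 2)) = 0 := by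
      intro W hWF hWI hWclass
      have hmodp : ((∑ i ∈ (W ∪ F), a i : ℕ) : ZMod p) = 0 := by
        rw [Finset.sum_union hWF]
        push_cast
        rw [← Nat.cast_sum, ← Nat.cast_sum, hWclass, hFsum]
        ring
      have hdvd : (p:ℕ)^2 ∣ ∑ i ∈ (W ∪ F), a i := by
        apply hZ _ (Finset.disjoint_union_left.mpr ⟨hWI, hFI⟩)
        exact (ZMod.natCast_eq_zero_iff _ _).mp hmodp
      have : ((∑ i ∈ (W ∪ F), a i : ℕ) : ZMod (p ^ 2)) = 0 :=
        (ZMod.natCast_eq_zero_iff _ _).mpr hdvd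
      rw [Finset.sum_union hWF] at this
      push_cast at this
      rw [← Nat.cast_sum, ← Nat.cast_sum] at this
      exact this
    have hS := key S hdSF hSI rfl
    have hT := key T hdTF hTI hclass.symm
    have := hS.trans hT.symm
    exact add_right_cancel this
  -- representatives in blocks R1, R2, R3
  have hrepgen : ∀ R : Finset (Fin d), R ⊆ U → R.card = p →
      ∀ s : ZMod p, ∃ x, x ⊆ R ∧ ((∑ i ∈ x, a i : ℕ) : ZMod p) = s := by
    intro R hRU hcard s
    obtain ⟨x, h1, h2⟩ := coverage hp a R (fun i hi => hUmem i (hRU hi)) (by omega) s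
    exact ⟨x, h1, h2⟩
  choose rep1 hrep1sub hrep1sum using hrepgen R1 hR1U hR1card
  choose rep2 hrep2sub hrep2sum using hrepgen R2 hR2U hR2card
  choose rep3 hrep3sub hrep3sum using hrepgen R3 hR3U hR3card
  have hdI : ∀ (x R : Finset (Fin d)), x ⊆ R → Disjoint Q R → Disjoint x I₀ := by
    intro x R hx hQR
    exact Finset.disjoint_of_subset_left hx (Finset.disjoint_of_subset_right hI₀Q hQR.symm)
  set φ : ZMod p → ZMod (p ^ 2) := fun s => ((∑ i ∈ rep1 s, a i : ℕ) : ZMod (p ^ 2)) with hφ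
  -- any subset of R2 ∪ R3 with class s has sum ≡ φ s mod p²
  have hkeyφ : ∀ (S : Finset (Fin d)) (s : ZMod p), S ⊆ R2 ∪ R3 →
      ((∑ i ∈ S, a i : ℕ) : ZMod p) = s →
      ((∑ i ∈ S, a i : ℕ) : ZMod (p ^ 2)) = φ s := by
    intro S s hSsub hSclass
    have hdR4S : Disjoint R4 S := by
      refine Finset.disjoint_of_subset_right hSsub ?_
      exact Finset.disjoint_union_right.mpr ⟨hd24.symm, hd34.symm⟩
    have hSI : Disjoint S I₀ := by
      refine hdI S (R2 ∪ R3) hSsub ?_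
      exact Finset.disjoint_union_right.mpr ⟨hdQ2, hdQ3⟩
    exact hW2 S (rep1 s) R4 hSI (hdI _ R1 (hrep1sub s) hdQ1) hR4U hdQ4.symm hdR4S
      (Finset.disjoint_of_subset_right (hrep1sub s) hd14.symm) hR4card
      (hSclass.trans (hrep1sum s).symm)
  -- (iii) inverses
  have hinv : ∀ s : ZMod p, φ s + φ (-s) = 0 := by
    intro s
    have h2 : ((∑ i ∈ rep2 (-s), a i : ℕ) : ZMod (p ^ 2)) = φ (-s) :=
      hkeyφ _ _ ((hrep2sub _).trans Finset.subset_union_left) (hrep2sum _)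
    have hd : Disjoint (rep1 s) (rep2 (-s)) :=
      Finset.disjoint_of_subset_left (hrep1sub s) (Finset.disjoint_of_subset_right (hrep2sub _) hd12)
    have hclass0 : ((∑ i ∈ (rep1 s ∪ rep2 (-s)), a i : ℕ) : ZMod p) = 0 := by
      rw [Finset.sum_union hd]
      push_cast
      rw [← Nat.cast_sum, ← Nat.cast_sum, hrep1sum, hrep2sum]
      ring
    have hdvd : (p:ℕ)^2 ∣ ∑ i ∈ (rep1 s ∪ rep2 (-s)), a i := by
      apply hZ
      · exact Finset.disjoint_union_left.mpr ⟨hdI _ R1 (hrep1sub s) hdQ1, hdI _ R2 (hrep2sub _) hdQ2⟩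
      · exact (ZMod.natCast_eq_zero_iff _ _).mp hclass0
    have : ((∑ i ∈ (rep1 s ∪ rep2 (-s)), a i : ℕ) : ZMod (p ^ 2)) = 0 :=
      (ZMod.natCast_eq_zero_iff _ _).mpr hdvd
    rw [Finset.sum_union hd] at this
    push_cast at this
    rw [← Nat.cast_sum, ← Nat.cast_sum] at this
    rw [← h2]
    simpa only [hφ] using this
  -- (ii) additivity
  have hadd : ∀ s s' : ZMod p, φ (s + s') = φ s + φ s' := by
    intro s s'
    have h2 : ((∑ i ∈ rep2 s, a i : ℕ) : ZMod (p ^ 2)) = φ s :=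
      hkeyφ _ _ ((hrep2sub _).trans Finset.subset_union_left) (hrep2sum _)
    have h3 : ((∑ i ∈ rep3 s', a i : ℕ) : ZMod (p ^ 2)) = φ s' :=
      hkeyφ _ _ ((hrep3sub _).trans Finset.subset_union_right) (hrep3sum _)
    have hd : Disjoint (rep2 s) (rep3 s') :=
      Finset.disjoint_of_subset_left (hrep2sub s) (Finset.disjoint_of_subset_right (hrep3sub _) hd23)
    have hUclass : ((∑ i ∈ (rep2 s ∪ rep3 s'), a i : ℕ) : ZMod p) = s + s' := by
      rw [Finset.sum_union hd]
      push_cast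
      rw [← Nat.cast_sum, ← Nat.cast_sum, hrep2sum, hrep3sum]
    have := hkeyφ (rep2 s ∪ rep3 s') (s + s')
      (Finset.union_subset ((hrep2sub _).trans Finset.subset_union_left)
        ((hrep3sub _).trans Finset.subset_union_right)) hUclass
    rw [Finset.sum_union hd] at this
    push_cast at this
    rw [← Nat.cast_sum, ← Nat.cast_sum] at this
    rw [h2, h3] at this
    exact this.symm
  -- φ is an additive map lifting the identity; contradiction
  have hzero : φ 0 = 0 := by
    have h := hadd 0 0
    rw [add_zero] at h
    exact (left_eq_add.mp h)
  have hmulnat : ∀ n : ℕ, φ ((n : ZMod p)) = (n : ZMod (p ^ 2)) * φ 1 := by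
    intro n
    induction n with
    | zero => simpa using hzero
    | succ n ih =>
      have : ((n + 1 : ℕ) : ZMod p) = (n : ZMod p) + 1 := by push_cast; ring
      rw [this, hadd, ih]
      push_cast
      ring
  have hp0 : ((p : ℕ) : ZMod (p ^ 2)) * φ 1 = 0 := by
    have h := hmulnat p
    rw [ZMod.natCast_self] at h
    rw [← h, hzero]
  haveI : Fact (1 < p) := ⟨hp.one_lt⟩
  have hdvd : (p:ℕ)^2 ∣ p * (∑ i ∈ rep1 1, a i) := by
    have : ((p * (∑ i ∈ rep1 1, a i) : ℕ) : ZMod (p ^ 2)) = 0 := by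
      push_cast
      rw [← Nat.cast_sum]
      exact hp0
    exact (ZMod.natCast_eq_zero_iff _ _).mp this
  have hpv : p ∣ (∑ i ∈ rep1 1, a i) := by
    rw [pow_two] at hdvd
    exact (Nat.mul_dvd_mul_iff_left hp.pos).mp hdvd
  have : ((∑ i ∈ rep1 1, a i : ℕ) : ZMod p) = 0 :=
    (ZMod.natCast_eq_zero_iff _ _).mpr hpv
  rw [hrep1sum 1] at this
  exact one_ne_zero this


def Lnat (m : ℕ) : ℕ := (Finset.Icc 1 m).lcm id

lemma Lnat_ne_zero (m : ℕ) : Lnat m ≠ 0 := by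
  unfold Lnat
  intro h
  rw [Finset.lcm_eq_zero_iff] at h
  simp only [Set.mem_image, Finset.mem_coe, Finset.mem_Icc, id] at h
  obtain ⟨i, ⟨h1, _⟩, h0⟩ := h
  omega

lemma dvd_Lnat {j m : ℕ} (h1 : 1 ≤ j) (h2 : j ≤ m) : j ∣ Lnat m :=
  Finset.dvd_lcm (Finset.mem_Icc.mpr ⟨h1, h2⟩)

lemma centralBinom_dvd_Lnat (n : ℕ) (hn : 1 ≤ n) : Nat.centralBinom n ∣ Lnat (2 * n) := by
  rw [← Nat.factorization_le_iff_dvd (Nat.centralBinom_ne_zero n) (Lnat_ne_zero _)]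
  rw [Finsupp.le_def]
  intro p
  by_cases hp : p.Prime
  · have h1 : (Nat.centralBinom n).factorization p ≤ Nat.log p (2 * n) :=
      Nat.factorization_choose_le_log
    refine h1.trans ?_
    -- p ^ log p (2n) divides Lnat (2n)
    have hple : p ^ Nat.log p (2 * n) ≤ 2 * n := Nat.pow_log_le_self p (by omega)
    have hdvd : p ^ Nat.log p (2 * n) ∣ Lnat (2 * n) :=
      dvd_Lnat (Nat.one_le_pow _ _ hp.pos) hple
    exact (Nat.Prime.pow_dvd_iff_le_factorization hp (Lnat_ne_zero _)).mp hdvd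
  · simp [Nat.factorization_eq_zero_of_not_prime _ hp]

def Rnat (m : ℕ) : ℕ := ∏ p ∈ Nat.primesBelow (Nat.sqrt m + 1), p ^ (Nat.log p m)

lemma Rnat_pos (m : ℕ) : 0 < Rnat m := by
  apply Finset.prod_pos
  intro p hp
  exact pow_pos (Nat.lt_of_lt_of_le two_pos (Nat.prime_of_mem_primesBelow hp).two_le) _

lemma Lnat_dvd (m : ℕ) : Lnat m ∣ primorial m * Rnat m := by
  apply Finset.lcm_dvd
  intro j hj
  obtain ⟨hj1, hjm⟩ := Finset.mem_Icc.mp hj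
  have hprodne : primorial m * Rnat m ≠ 0 :=
    Nat.mul_ne_zero (primorial_pos m).ne' (Rnat_pos m).ne'
  rw [id, ← Nat.factorization_le_iff_dvd (by omega) hprodne, Finsupp.le_def]
  intro p
  set v := j.factorization p with hv
  rcases Nat.eq_zero_or_pos v with h0 | hpos
  · simp [← hv, h0]
  have hp : p.Prime := by
    by_contra hnp
    rw [hv, Nat.factorization_eq_zero_of_not_prime _ hnp] at hpos
    omega
  have hpvj : p ^ v ∣ j := Nat.ordProj_dvd j p
  have hpvm : p ^ v ≤ m := (Nat.le_of_dvd (by omega) hpvj).trans hjm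
  have hfmul : (primorial m * Rnat m).factorization p
      = (primorial m).factorization p + (Rnat m).factorization p := by
    rw [Nat.factorization_mul (primorial_pos m).ne' (Rnat_pos m).ne']
    simp
  rcases Nat.lt_or_ge v 2 with hv1 | hv2
  · -- v = 1 : use primorial
    have hpm : p ≤ m := by
      calc p = p ^ 1 := (pow_one p).symm
        _ ≤ p ^ v := Nat.pow_le_pow_right hp.pos hpos
        _ ≤ m := hpvm
    have hdvdP : p ∣ primorial m := by
      apply Finset.dvd_prod_of_mem
      simp only [Finset.mem_filter, Finset.mem_range]
      exact ⟨by omega, hp⟩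
    have h1 : 1 ≤ (primorial m).factorization p :=
      (Nat.Prime.dvd_iff_one_le_factorization hp (primorial_pos m).ne').mp hdvdP
    rw [hfmul]
    omega
  · -- v ≥ 2 : use Rnat
    have hpsq : p * p ≤ m := by
      calc p * p = p ^ 2 := (sq p).symm
        _ ≤ p ^ v := Nat.pow_le_pow_right hp.pos hv2
        _ ≤ m := hpvm
    have hpsqrt : p ≤ Nat.sqrt m := Nat.le_sqrt.mpr hpsq
    have hmem : p ∈ Nat.primesBelow (Nat.sqrt m + 1) :=
      Nat.mem_primesBelow.mpr ⟨by omega, hp⟩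
    have hvlog : v ≤ Nat.log p m := by
      rw [Nat.le_log_iff_pow_le hp.one_lt (by omega : m ≠ 0)]
      exact hpvm
    have hdvdR : p ^ (Nat.log p m) ∣ Rnat m := Finset.dvd_prod_of_mem _ hmem
    have h1 : Nat.log p m ≤ (Rnat m).factorization p :=
      (Nat.Prime.pow_dvd_iff_le_factorization hp (Rnat_pos m).ne').mp hdvdR
    rw [hfmul]
    omega

lemma Rnat_le (m : ℕ) (hm : 1 ≤ m) : Rnat m ≤ m ^ (Nat.sqrt m + 1) := by
  unfold Rnat
  calc ∏ p ∈ Nat.primesBelow (Nat.sqrt m + 1), p ^ (Nat.log p m)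
      ≤ ∏ _p ∈ Nat.primesBelow (Nat.sqrt m + 1), m := by
        apply Finset.prod_le_prod (fun _ _ => Nat.zero_le _)
        intro p _
        exact Nat.pow_log_le_self p (by omega)
    _ = m ^ (Nat.primesBelow (Nat.sqrt m + 1)).card := Finset.prod_const m
    _ ≤ m ^ (Nat.sqrt m + 1) := by
        apply Nat.pow_le_pow_right (by omega)
        calc (Nat.primesBelow (Nat.sqrt m + 1)).card
            ≤ (Finset.range (Nat.sqrt m + 1)).card := Finset.card_filter_le _ _
          _ = Nat.sqrt m + 1 := Finset.card_range _

lemma num_helper1 : ∀ k, 11 ≤ k → 8 * k + 12 ≤ 2 ^ k := by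
  intro k hk
  induction k, hk using Nat.le_induction with
  | base => norm_num
  | succ k hk ih =>
    have h2 : 8 ≤ 2 ^ k := le_trans (by omega) ih
    rw [pow_succ]
    omega

lemma num_helper2 : ∀ l, 22 ≤ l → 4 * (l + 2) ≤ 2 ^ (l / 2) := by
  intro l hl
  have hk : 11 ≤ l / 2 := by omega
  have h1 := num_helper1 (l / 2) hk
  have h2 : l ≤ 2 * (l / 2) + 1 := by omega
  calc 4 * (l + 2) ≤ 4 * (2 * (l / 2) + 1 + 2) := by omega
    _ = 8 * (l / 2) + 12 := by ring
    _ ≤ 2 ^ (l / 2) := h1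

lemma num_helper3 (n : ℕ) (hn : 2 ^ 21 ≤ n) :
    (Nat.log 2 (2 * n) + 1) * (Nat.sqrt (2 * n) + 2) ≤ n := by
  set a := Nat.sqrt (2 * n) with ha
  set l := Nat.log 2 (2 * n) with hl
  have hln : (2:ℕ) ^ 22 ≤ 2 * n := by omega
  have hl22 : 22 ≤ l := by
    rw [hl, Nat.le_log_iff_pow_le (by norm_num) (by omega)]
    exact hln
  have hpa : 2 ^ (l / 2) ≤ a := by
    rw [ha, Nat.le_sqrt]
    calc 2 ^ (l / 2) * 2 ^ (l / 2) = 2 ^ (l / 2 + l / 2) := (pow_add 2 _ _).symm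
      _ ≤ 2 ^ l := Nat.pow_le_pow_right (by norm_num) (by omega)
      _ ≤ 2 * n := Nat.pow_log_le_self 2 (by omega)
  have h42 : 4 * (l + 2) ≤ a := (num_helper2 l hl22).trans hpa
  have ha2 : 2 ≤ a := by
    have : (2:ℕ)^(l/2) ≥ 2 := by
      calc (2:ℕ) = 2 ^ 1 := (pow_one 2).symm
        _ ≤ 2 ^ (l / 2) := Nat.pow_le_pow_right (by norm_num) (by omega)
    omega
  have haa : a * a ≤ 2 * n := Nat.sqrt_le (2 * n)
  -- 2 * X ≤ 2 * n
  have key : 2 * ((l + 1) * (a + 2)) ≤ 2 * n := by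
    calc 2 * ((l + 1) * (a + 2)) ≤ 2 * ((l + 2) * (2 * a)) := by
          apply Nat.mul_le_mul_left
          apply Nat.mul_le_mul (by omega) (by omega)
      _ = a * (4 * (l + 2)) := by ring
      _ ≤ a * a := Nat.mul_le_mul_left a h42
      _ ≤ 2 * n := haa
  omega

lemma primorial_mono' {m₁ m₂ : ℕ} (h : m₁ ≤ m₂) : primorial m₁ ≤ primorial m₂ := by
  unfold primorial
  apply Finset.prod_le_prod_of_subset_of_one_le'
  · apply Finset.filter_subset_filter
    exact Finset.range_subset_range.mpr (by omega)
  · intro p hp _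
    exact (Finset.mem_filter.mp hp).2.one_lt.le

lemma primorial_lower_even (n : ℕ) (hn : 2 ^ 21 ≤ n) : 2 ^ n ≤ primorial (2 * n) := by
  have hn1 : 1 ≤ n := by omega
  have h1 : 4 ^ n ≤ 2 * n * Nat.centralBinom n :=
    Nat.four_pow_le_two_mul_self_mul_centralBinom n (by omega)
  have h2 : Nat.centralBinom n ≤ Lnat (2 * n) :=
    Nat.le_of_dvd (Nat.pos_of_ne_zero (Lnat_ne_zero (2*n))) (centralBinom_dvd_Lnat n hn1)
  have h3 : Lnat (2 * n) ≤ primorial (2 * n) * Rnat (2 * n) :=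
    Nat.le_of_dvd (Nat.mul_pos (primorial_pos _) (Rnat_pos _)) (Lnat_dvd (2 * n))
  have h4 : Rnat (2 * n) ≤ (2 * n) ^ (Nat.sqrt (2 * n) + 1) := Rnat_le (2 * n) (by omega)
  have h5 : (2 * n) * (2 * n) ^ (Nat.sqrt (2 * n) + 1) = (2 * n) ^ (Nat.sqrt (2 * n) + 2) := by
    rw [← pow_succ']
  have h6 : (2 * n) ^ (Nat.sqrt (2 * n) + 2) ≤ 2 ^ n := by
    have hlt : 2 * n < 2 ^ (Nat.log 2 (2 * n) + 1) := Nat.lt_pow_succ_log_self (by norm_num) _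
    calc (2 * n) ^ (Nat.sqrt (2 * n) + 2)
        ≤ (2 ^ (Nat.log 2 (2 * n) + 1)) ^ (Nat.sqrt (2 * n) + 2) :=
          Nat.pow_le_pow_left hlt.le _
      _ = 2 ^ ((Nat.log 2 (2 * n) + 1) * (Nat.sqrt (2 * n) + 2)) := by rw [← pow_mul]
      _ ≤ 2 ^ n := Nat.pow_le_pow_right (by norm_num) (num_helper3 n hn)
  have main : 2 ^ n * 2 ^ n ≤ primorial (2 * n) * 2 ^ n := by
    calc 2 ^ n * 2 ^ n = 4 ^ n := by rw [← mul_pow]; norm_num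
      _ ≤ 2 * n * Nat.centralBinom n := h1
      _ ≤ 2 * n * (primorial (2 * n) * Rnat (2 * n)) :=
          Nat.mul_le_mul_left _ (h2.trans h3)
      _ ≤ 2 * n * (primorial (2 * n) * ((2 * n) ^ (Nat.sqrt (2 * n) + 1))) :=
          Nat.mul_le_mul_left _ (Nat.mul_le_mul_left _ h4)
      _ = primorial (2 * n) * ((2 * n) * (2 * n) ^ (Nat.sqrt (2 * n) + 1)) := by ring
      _ = primorial (2 * n) * ((2 * n) ^ (Nat.sqrt (2 * n) + 2)) := by rw [h5]
      _ ≤ primorial (2 * n) * 2 ^ n := Nat.mul_le_mul_left _ h6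
  exact Nat.le_of_mul_le_mul_right main (by positivity)

lemma primorial_lower (m : ℕ) (hm : 2 ^ 22 ≤ m) : 2 ^ (m / 2) ≤ primorial m := by
  have h1 : 2 ^ 21 ≤ m / 2 := by omega
  have h2 : 2 * (m / 2) ≤ m := by omega
  exact (primorial_lower_even (m / 2) h1).trans (primorial_mono' h2)

set_option maxHeartbeats 1000000 in
lemma main_count (d N : ℕ) (hN : 2 ≤ N) (a : Fin d → ℕ)
    (ha : ∀ i, a i ∈ Finset.Icc 1 N)
    (hE : ∀ p : ℕ, p.Prime → (Finset.univ.filter (fun i => ¬ (p ∣ a i))).card ≤ 5 * p) :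
    d ≤ 160 * Nat.log 2 N + 20 * 2 ^ 22 + 220 := by
  classical
  by_contra hcon
  push_neg at hcon
  set L := Nat.log 2 N with hL
  set P := d / 20 with hP
  have hPbig : 2 ^ 22 ≤ P := by omega
  have hd2 : 2 ≤ d := by omega
  set e := d - 5 * P with he
  have hed : d / 2 ≤ e := by omega
  -- count of indices divisible by p
  have hcnt : ∀ p ∈ Nat.primesBelow (P + 1),
      e ≤ (Finset.univ.filter (fun i => p ∣ a i)).card := by
    intro p hp
    have hpP : p ≤ P := by
      have := (Nat.mem_primesBelow.mp hp).1; omega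
    have hprime := Nat.prime_of_mem_primesBelow hp
    have hsplit := Finset.card_filter_add_card_filter_not
      (s := (Finset.univ : Finset (Fin d))) (p := fun i => p ∣ a i)
    have hEp := hE p hprime
    have : (Finset.univ : Finset (Fin d)).card = d := Finset.card_univ.trans (Fintype.card_fin d)
    omega
  -- product bound
  have key : primorial P ^ e ≤ N ^ d := by
    have hprimeq : primorial P = ∏ p ∈ Nat.primesBelow (P + 1), p := rfl
    calc primorial P ^ e = ∏ p ∈ Nat.primesBelow (P + 1), p ^ e := by
          rw [hprimeq, ← Finset.prod_pow]
      _ ≤ ∏ p ∈ Nat.primesBelow (P + 1), p ^ (Finset.univ.filter (fun i => p ∣ a i)).card := by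
          apply Finset.prod_le_prod (fun _ _ => Nat.zero_le _)
          intro p hp
          exact Nat.pow_le_pow_right (Nat.prime_of_mem_primesBelow hp).pos (hcnt p hp)
      _ = ∏ p ∈ Nat.primesBelow (P + 1), ∏ i ∈ Finset.univ.filter (fun i => p ∣ a i), p := by
          apply Finset.prod_congr rfl
          intro p _
          rw [Finset.prod_const]
      _ = ∏ p ∈ Nat.primesBelow (P + 1), ∏ i ∈ (Finset.univ : Finset (Fin d)),
            (if p ∣ a i then p else 1) := by
          apply Finset.prod_congr rfl
          intro p _
          rw [Finset.prod_filter]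
      _ = ∏ i ∈ (Finset.univ : Finset (Fin d)), ∏ p ∈ Nat.primesBelow (P + 1),
            (if p ∣ a i then p else 1) := Finset.prod_comm
      _ = ∏ i ∈ (Finset.univ : Finset (Fin d)),
            ∏ p ∈ (Nat.primesBelow (P + 1)).filter (fun p => p ∣ a i), p := by
          apply Finset.prod_congr rfl
          intro i _
          rw [Finset.prod_filter]
      _ ≤ ∏ i ∈ (Finset.univ : Finset (Fin d)), a i := by
          apply Finset.prod_le_prod (fun _ _ => Nat.zero_le _)
          intro i _
          have hai : 1 ≤ a i := (Finset.mem_Icc.mp (ha i)).1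
          have hsub : (Nat.primesBelow (P + 1)).filter (fun p => p ∣ a i) ⊆ (a i).primeFactors := by
            intro p hp
            obtain ⟨hp1, hp2⟩ := Finset.mem_filter.mp hp
            exact Nat.mem_primeFactors.mpr ⟨Nat.prime_of_mem_primesBelow hp1, hp2, by omega⟩
          have hdvd : ∏ p ∈ (Nat.primesBelow (P + 1)).filter (fun p => p ∣ a i), p ∣ a i :=
            (Finset.prod_dvd_prod_of_subset _ _ _ hsub).trans (Nat.prod_primeFactors_dvd _)
          exact Nat.le_of_dvd (by omega) hdvd
      _ ≤ ∏ i ∈ (Finset.univ : Finset (Fin d)), N := by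
          apply Finset.prod_le_prod (fun _ _ => Nat.zero_le _)
          intro i _
          exact (Finset.mem_Icc.mp (ha i)).2
      _ = N ^ d := by rw [Finset.prod_const, Finset.card_univ, Fintype.card_fin]
  -- exponent comparison
  have hexp : (P / 2) * e ≤ (L + 1) * d := by
    have h1 : 2 ^ ((P / 2) * e) ≤ 2 ^ ((L + 1) * d) := by
      calc 2 ^ ((P / 2) * e) = (2 ^ (P / 2)) ^ e := by rw [pow_mul]
        _ ≤ primorial P ^ e := Nat.pow_le_pow_left (primorial_lower P hPbig) e
        _ ≤ N ^ d := key
        _ ≤ (2 ^ (L + 1)) ^ d := Nat.pow_le_pow_left (Nat.lt_pow_succ_log_self (by norm_num) N).le d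
        _ = 2 ^ ((L + 1) * d) := by rw [← pow_mul]
    exact (Nat.pow_le_pow_iff_right (by norm_num : 1 < 2)).mp h1
  -- derive contradiction
  set c := L + 1 with hc
  set h := d / 2 with hh
  have hk1 : (4 * c + 1) * h ≤ (P / 2) * e := by
    apply Nat.mul_le_mul _ hed
    omega
  have hk3 : c * d ≤ c * (2 * h + 1) := Nat.mul_le_mul_left c (by omega)
  have hfin : (4 * c + 1) * h ≤ c * (2 * h + 1) := le_trans hk1 (le_trans hexp hk3)
  set z := c * h with hz
  have e1 : 4 * z + h ≤ 2 * z + c := by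
    have l1 : (4 * c + 1) * h = 4 * z + h := by rw [hz]; ring
    have l2 : c * (2 * h + 1) = 2 * z + c := by rw [hz]; ring
    omega
  have e2 : c ≤ z := by
    calc c = c * 1 := (mul_one c).symm
      _ ≤ c * h := Nat.mul_le_mul_left c (by omega)
      _ = z := rfl
  omega


theorem hilbert_cube_in_powerful : ∃ C : ℝ, 0 < C ∧
    ∀ (N : ℕ), 2 ≤ N → ∀ (d : ℕ) (a0 : ℕ) (a : Fin d → ℕ),
    (∀ i, a i ∈ Finset.Icc 1 N) →
    (∀ I : Finset (Fin d), (I.Nonempty ∨ a0 ≠ 0) → Powerful (a0 + ∑ i ∈ I, a i)) →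
    (d : ℝ) ≤ C * Real.log N := by
  classical
  refine ⟨2 ^ 30, by norm_num, ?_⟩
  intro N hN d a0 a ha hcube
  have hEbound : ∀ p : ℕ, p.Prime →
      (Finset.univ.filter (fun i => ¬ (p ∣ a i))).card ≤ 5 * p :=
    fun p hp => per_prime p hp a0 a hcube
  have hnat : d ≤ 160 * Nat.log 2 N + 20 * 2 ^ 22 + 220 :=
    main_count d N hN a ha hEbound
  -- real conversion
  set L := Nat.log 2 N with hL
  have hlog2 : (0.6931471803 : ℝ) < Real.log 2 := Real.log_two_gt_d9
  have hNpos : (0:ℝ) < N := by positivity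
  have hlogN : Real.log 2 ≤ Real.log N := by
    apply Real.log_le_log (by norm_num)
    exact_mod_cast hN
  have hlogNpos : (0:ℝ) < Real.log N := lt_of_lt_of_le (by linarith) hlogN
  have hLlog : (L : ℝ) * Real.log 2 ≤ Real.log N := by
    have h1 : (2:ℕ) ^ L ≤ N := Nat.pow_log_le_self 2 (by omega)
    have h2 : ((2:ℝ)) ^ (L:ℕ) ≤ (N:ℝ) := by exact_mod_cast h1
    have h3 := Real.log_le_log (by positivity) h2
    rwa [Real.log_pow] at h3
  have hL2 : (L : ℝ) ≤ 2 * Real.log N := by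
    nlinarith [Nat.cast_nonneg (α := ℝ) L]
  have h1le : (1:ℝ) ≤ 2 * Real.log N := by linarith
  have hdr : (d : ℝ) ≤ 160 * L + 20 * 2 ^ 22 + 220 := by exact_mod_cast hnat
  calc (d:ℝ) ≤ 160 * L + 20 * 2 ^ 22 + 220 := hdr
    _ ≤ 160 * (2 * Real.log N) + (20 * 2 ^ 22 + 220) * (2 * Real.log N) := by
        have := hL2
        nlinarith [hlogNpos]
    _ ≤ 2 ^ 30 * Real.log N := by nlinarith [hlogNpos]
end

section
/- Suppose an arithmetic progression a+q, a+2q, …, a+ℓq (with a ≥ 0, q ≥ 1, ℓ ≥ 1) consists entirely of perfect powers and Δ = gcd(a,q) > 1. Let r be a prime dividing Δ and write r^α ∥ Δ (i.e., r^α | Δ, r^{α+1} ∤ Δ). Then for each 1 ≤ j ≤ ℓ-1, writing a+qj = x_j^{y_j} with y_j prime, at least one of y_j and y_{j+1} divides α. Consequently, ℓ ≤ 2·Σ_{p | α, p prime} Q_p(ℓ; q, a) + 1, where Q_p(ℓ;q,a) counts the p-th powers among a+q, …, a+ℓq. -/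
open scoped Classical in
theorem ap_of_perfect_powers_exponents (a q ℓ : ℕ) (hq : 1 ≤ q) (hℓ : 1 ≤ ℓ)
    (hpp : ∀ j ∈ Finset.Icc 1 ℓ, ∃ x k : ℕ, 2 ≤ k ∧ x ^ k = a + j * q)
    (Δ : ℕ) (hΔ : Δ = Nat.gcd a q) (hΔ1 : 1 < Δ)
    (r : ℕ) (hr : r.Prime) (hrΔ : r ∣ Δ)
    (α : ℕ) (hα : r ^ α ∣ Δ) (hα' : ¬ r ^ (α + 1) ∣ Δ) :
    (∀ j, 1 ≤ j → j + 1 ≤ ℓ → ∀ x y x' y' : ℕ, y.Prime → y'.Prime →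
        x ^ y = a + j * q → x' ^ y' = a + (j + 1) * q → y ∣ α ∨ y' ∣ α) ∧
      ℓ ≤ 2 * (∑ p ∈ α.primeFactors,
        ((Finset.Icc 1 ℓ).filter (fun j => ∃ x : ℕ, x ^ p = a + j * q)).card) + 1 := by
  have hΔa : Δ ∣ a := hΔ ▸ Nat.gcd_dvd_left a q
  have hΔq : Δ ∣ q := hΔ ▸ Nat.gcd_dvd_right a q
  have hαa : r ^ α ∣ a := hα.trans hΔa
  have hαq : r ^ α ∣ q := hα.trans hΔq
  have hα1 : 1 ≤ α := by
    rcases Nat.eq_zero_or_pos α with h | h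
    · exact absurd (by simpa [h] using hrΔ) hα'
    · exact h
  have hterm : ∀ j : ℕ, r ^ α ∣ a + j * q := fun j =>
    Nat.dvd_add hαa (Dvd.dvd.mul_left hαq j)
  have hne : ∀ j : ℕ, 1 ≤ j → a + j * q ≠ 0 := by
    intro j hj
    have : 1 ≤ j * q := Nat.one_le_iff_ne_zero.mpr (Nat.mul_ne_zero (by omega) (by omega))
    omega
  -- Lemma A: a term with r-valuation exactly α has exponent dividing α
  have lemA : ∀ j x y : ℕ, 1 ≤ j → y.Prime → x ^ y = a + j * q →
      ¬ r ^ (α + 1) ∣ a + j * q → y ∣ α := by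
    intro j x y hj hy hxy hnd
    have hne' : a + j * q ≠ 0 := hne j hj
    have h1 : (a + j * q).factorization r = α := by
      have hle : α ≤ (a + j * q).factorization r :=
        (Nat.Prime.pow_dvd_iff_le_factorization hr hne').mp (hterm j)
      have hlt : (a + j * q).factorization r < α + 1 := by
        by_contra h
        push_neg at h
        exact hnd ((Nat.Prime.pow_dvd_iff_le_factorization hr hne').mpr h)
      omega
    rw [← hxy, Nat.factorization_pow] at h1
    simp only [Finsupp.smul_apply, smul_eq_mul] at h1
    exact ⟨_, h1.symm⟩
  -- Lemma C: for consecutive terms, one is not divisible by r^(α+1)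
  have lemC : ∀ j : ℕ, ¬ r ^ (α + 1) ∣ a + j * q ∨ ¬ r ^ (α + 1) ∣ a + (j + 1) * q := by
    intro j
    by_cases hq1 : r ^ (α + 1) ∣ q
    · have hna : ¬ r ^ (α + 1) ∣ a := fun h => hα' (hΔ ▸ Nat.dvd_gcd h hq1)
      left
      intro h
      have h2 := Nat.dvd_sub h (Dvd.dvd.mul_left hq1 j)
      rw [Nat.add_sub_cancel] at h2
      exact hna h2
    · by_contra hcon
      push_neg at hcon
      obtain ⟨h1, h2⟩ := hcon
      have h3 := Nat.dvd_sub h2 h1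
      have h4 : a + (j + 1) * q - (a + j * q) = q := by
        have : (j + 1) * q = j * q + q := by ring
        omega
      rw [h4] at h3
      exact hq1 h3
  -- Part 1
  have part1 : ∀ j, 1 ≤ j → j + 1 ≤ ℓ → ∀ x y x' y' : ℕ, y.Prime → y'.Prime →
      x ^ y = a + j * q → x' ^ y' = a + (j + 1) * q → y ∣ α ∨ y' ∣ α := by
    intro j hj hjl x y x' y' hy hy' hxy hxy'
    rcases lemC j with h | h
    · exact Or.inl (lemA j x y hj hy hxy h)
    · exact Or.inr (lemA (j + 1) x' y' (by omega) hy' hxy' h)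
  refine ⟨part1, ?_⟩
  -- Part 2: counting
  set P : ℕ → Prop := fun j => ∃ p ∈ α.primeFactors, ∃ x : ℕ, x ^ p = a + j * q with hP
  set S : Finset ℕ := (Finset.Icc 1 ℓ).filter P with hS
  have hrep : ∀ j ∈ Finset.Icc 1 ℓ, ∃ x p : ℕ, p.Prime ∧ x ^ p = a + j * q := by
    intro j hj
    obtain ⟨x, k, hk, hxk⟩ := hpp j hj
    refine ⟨x ^ (k / k.minFac), k.minFac, Nat.minFac_prime (by omega), ?_⟩
    rw [← pow_mul, Nat.div_mul_cancel (Nat.minFac_dvd k)]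
    exact hxk
  have hcov : ∀ j, 1 ≤ j → j + 1 ≤ ℓ → P j ∨ P (j + 1) := by
    intro j hj hjl
    obtain ⟨x, p, hp, hxp⟩ := hrep j (Finset.mem_Icc.mpr ⟨hj, by omega⟩)
    obtain ⟨x', p', hp', hxp'⟩ := hrep (j + 1) (Finset.mem_Icc.mpr ⟨by omega, hjl⟩)
    rcases part1 j hj hjl x p x' p' hp hp' hxp hxp' with h | h
    · exact Or.inl ⟨p, Nat.mem_primeFactors.mpr ⟨hp, h, by omega⟩, x, hxp⟩
    · exact Or.inr ⟨p', Nat.mem_primeFactors.mpr ⟨hp', h, by omega⟩, x', hxp'⟩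
  have hST : S ⊆ Finset.Icc 1 ℓ := Finset.filter_subset _ _
  set T : Finset ℕ := Finset.Icc 1 ℓ \ S with hT
  have hcards : S.card + T.card = ℓ := by
    rw [hT, Finset.card_sdiff_of_subset hST]
    have h1 := Finset.card_le_card hST
    have h2 : (Finset.Icc 1 ℓ).card = ℓ := by rw [Nat.card_Icc]; omega
    omega
  have hTcard : T.card ≤ S.card + 1 := by
    have hmap : T.card ≤ (insert (ℓ + 1) S).card := by
      apply Finset.card_le_card_of_injOn (fun j => j + 1)
      · intro j hj
        rw [hT, Finset.mem_coe, Finset.mem_sdiff] at hj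
        obtain ⟨hj1, hj2⟩ := hj
        rw [Finset.mem_Icc] at hj1
        have hnP : ¬ P j := by
          intro h
          exact hj2 (Finset.mem_filter.mpr ⟨Finset.mem_Icc.mpr hj1, h⟩)
        by_cases hje : j = ℓ
        · subst hje; exact Finset.mem_insert_self _ _
        · have hjl : j + 1 ≤ ℓ := by omega
          rcases hcov j hj1.1 hjl with h | h
          · exact absurd h hnP
          · exact Finset.mem_insert_of_mem
              (Finset.mem_filter.mpr ⟨Finset.mem_Icc.mpr ⟨(by omega : 1 ≤ j + 1), hjl⟩, h⟩)
      · intro u _ v _ h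
        simpa using h
    have := Finset.card_insert_le (ℓ + 1) S
    omega
  have hsum : S.card ≤ ∑ p ∈ α.primeFactors,
      ((Finset.Icc 1 ℓ).filter (fun j => ∃ x : ℕ, x ^ p = a + j * q)).card := by
    calc S.card ≤ (α.primeFactors.biUnion
        (fun p => (Finset.Icc 1 ℓ).filter (fun j => ∃ x : ℕ, x ^ p = a + j * q))).card := by
          apply Finset.card_le_card
          intro j hj
          rw [hS, Finset.mem_filter] at hj
          obtain ⟨hj1, p, hpmem, x, hx⟩ := hj
          exact Finset.mem_biUnion.mpr ⟨p, hpmem, Finset.mem_filter.mpr ⟨hj1, x, hx⟩⟩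
      _ ≤ _ := Finset.card_biUnion_le
  have hfin : ℓ ≤ 2 * S.card + 1 := by omega
  exact hfin.trans (Nat.add_le_add_right (Nat.mul_le_mul_left 2 hsum) 1)
end
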